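/- arXiv:0911.2589 — 3 statements merged into one kernel-verified Lean document; each statement's English description precedes it below -/
import Mathlib

section
/- For integers 1 ≤ k ≤ n, x(Q_{n/k}) ≤ n/k, and if k is odd then x(Q_{n/k}) ≤ (n+1)/(k+1). -/
attribute [local instance] Classical.propDecidable

/-- A cut in a graph: the set of edges leaving some vertex set `W`. -/
def IsCut {V : Type*} (G : SimpleGraph V) (X : Set (Sym2 V)) : Prop :=
  ∃ W : Set V, X = {e | e ∈ G.edgeSet ∧ ∃ a b, e = s(a, b) ∧ a ∈ W ∧ b ∉ W}

/-- An `n/k`-cover: `n` cuts covering every edge at least `k` times. -/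
def HasCover {V : Type*} (G : SimpleGraph V) (n k : ℕ) : Prop :=
  ∃ X : Fin n → Set (Sym2 V), (∀ i, IsCut G (X i)) ∧
    ∀ e ∈ G.edgeSet, k ≤ (Finset.univ.filter fun i => e ∈ X i).card

/-- The fractional cut-covering number `x(G)`. -/
noncomputable def cutCover {V : Type*} (G : SimpleGraph V) : ℝ :=
  sInf { q : ℝ | ∃ n k : ℕ, 0 < k ∧ q = n / k ∧ HasCover G n k }

/-- The graph `Q_{n/k}` on `{0,1}^n`, with edges between vertices at Hamming distance `≥ k`. -/
def cubeGraph (n k : ℕ) : SimpleGraph (Fin n → Bool) :=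
  SimpleGraph.fromRel (fun x y => k ≤ hammingDist x y)

/-- The cut determined by a vertex set `W`. -/
def cutOf {V : Type*} (G : SimpleGraph V) (W : Set V) : Set (Sym2 V) :=
  {e | e ∈ G.edgeSet ∧ ∃ a b, e = s(a, b) ∧ a ∈ W ∧ b ∉ W}

lemma isCut_cutOf {V : Type*} (G : SimpleGraph V) (W : Set V) : IsCut G (cutOf G W) :=
  ⟨W, rfl⟩

lemma mem_cutOf_iff {V : Type*} (G : SimpleGraph V) (W : Set V) {a b : V}
    (hab : G.Adj a b) :
    s(a, b) ∈ cutOf G W ↔ ((a ∈ W ∧ b ∉ W) ∨ (b ∈ W ∧ a ∉ W)) := by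
  constructor
  · rintro ⟨-, a', b', he, hw, hw'⟩
    rw [Sym2.eq_iff] at he
    rcases he with ⟨rfl, rfl⟩ | ⟨rfl, rfl⟩
    · exact Or.inl ⟨hw, hw'⟩
    · exact Or.inr ⟨hw, hw'⟩
  · rintro (⟨h1, h2⟩ | ⟨h1, h2⟩)
    · exact ⟨G.mem_edgeSet.2 hab, a, b, rfl, h1, h2⟩
    · exact ⟨G.mem_edgeSet.2 hab, b, a, Sym2.eq_swap, h1, h2⟩

lemma adj_cube {n k : ℕ} {a b : Fin n → Bool} (h : (cubeGraph n k).Adj a b) :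
    k ≤ hammingDist a b := by
  rcases h with ⟨-, h | h⟩
  · exact h
  · rwa [hammingDist_comm]

/-- membership of a Hamming edge in the i-th coordinate cut -/
lemma mem_coordCut {n k : ℕ} {a b : Fin n → Bool} (hab : (cubeGraph n k).Adj a b)
    (i : Fin n) :
    s(a, b) ∈ cutOf (cubeGraph n k) {x | x i = true} ↔ a i ≠ b i := by
  rw [mem_cutOf_iff _ _ hab]
  simp only [Set.mem_setOf_eq]
  cases hai : a i <;> cases hbi : b i <;> simp

lemma hasCover_cube (n k : ℕ) : HasCover (cubeGraph n k) n k := by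
  refine ⟨fun i => cutOf (cubeGraph n k) {x | x i = true},
    fun i => isCut_cutOf _ _, ?_⟩
  intro e he
  induction e using Sym2.ind with
  | _ a b =>
    rw [SimpleGraph.mem_edgeSet] at he
    have hd : k ≤ hammingDist a b := adj_cube he
    calc k ≤ hammingDist a b := hd
      _ = (Finset.univ.filter fun i => s(a, b) ∈
            cutOf (cubeGraph n k) {x | x i = true}).card := by
        unfold hammingDist
        congr 1
        ext i
        simp [mem_coordCut he]

/-- The parity of a boolean vector, in `ZMod 2`. -/
def par {n : ℕ} (x : Fin n → Bool) : ZMod 2 := ∑ i, if x i then 1 else 0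

lemma par_add {n : ℕ} (a b : Fin n → Bool) :
    par a + par b = (hammingDist a b : ZMod 2) := by
  unfold par hammingDist
  rw [← Finset.sum_add_distrib, Finset.card_filter, Nat.cast_sum]
  apply Finset.sum_congr rfl
  intro i _
  cases hai : a i <;> cases hbi : b i <;> simp <;> decide

lemma hasCover_cube_odd (n k : ℕ) (hodd : Odd k) :
    HasCover (cubeGraph n k) (n + 1) (k + 1) := by
  refine ⟨Fin.snoc (fun i => cutOf (cubeGraph n k) {x | x i = true})
      (cutOf (cubeGraph n k) {x | par x = 1}),
    ?_, ?_⟩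
  · intro i
    refine Fin.lastCases ?_ ?_ i
    · rw [Fin.snoc_last]; exact isCut_cutOf _ _
    · intro j; rw [Fin.snoc_castSucc]; exact isCut_cutOf _ _
  intro e he
  induction e using Sym2.ind with
  | _ a b =>
    rw [SimpleGraph.mem_edgeSet] at he
    have hd : k ≤ hammingDist a b := adj_cube he
    classical
    rw [Finset.card_filter, Fin.sum_univ_castSucc]
    simp only [Fin.snoc_castSucc, Fin.snoc_last]
    have h1 : (∑ i : Fin n, if s(a, b) ∈
        cutOf (cubeGraph n k) {x | x i = true} then 1 else 0) = hammingDist a b := by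
      unfold hammingDist
      rw [Finset.card_filter]
      apply Finset.sum_congr rfl
      intro i _
      simp [mem_coordCut he]
    rw [h1]
    rcases eq_or_lt_of_le hd with heq | hlt
    · -- hammingDist a b = k, odd, so parity cut covers
      have hmem : s(a, b) ∈ cutOf (cubeGraph n k) {x | par x = 1} := by
        rw [mem_cutOf_iff _ _ he]
        simp only [Set.mem_setOf_eq]
        have hodd' : (hammingDist a b : ZMod 2) = 1 := by
          rw [← heq]
          rcases hodd with ⟨m, rfl⟩
          push_cast
          rw [show (2 : ZMod 2) = 0 from rfl]
          ring
        have hsum : par a + par b = 1 := by rw [par_add, hodd']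
        revert hsum
        generalize par a = x; generalize par b = y
        revert x y; decide
      rw [if_pos hmem, ← heq]
    · by_cases hmem : s(a, b) ∈ cutOf (cubeGraph n k) {x | par x = 1}
      · rw [if_pos hmem]; exact Nat.add_le_add_right hd 1
      · rw [if_neg hmem, Nat.add_zero]; exact hlt

/-- `x(Q_{n/k}) ≤ n/k`; and if `k` is odd then `x(Q_{n/k}) ≤ (n+1)/(k+1)`. -/
theorem cutCover_cube_le (n k : ℕ) (hk : 1 ≤ k) (hkn : k ≤ n) :
    cutCover (cubeGraph n k) ≤ (n : ℝ) / k ∧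
    (Odd k → cutCover (cubeGraph n k) ≤ ((n : ℝ) + 1) / ((k : ℝ) + 1)) := by
  have hbdd : BddBelow { q : ℝ | ∃ n' k' : ℕ, 0 < k' ∧ q = n' / k' ∧
      HasCover (cubeGraph n k) n' k' } := by
    refine ⟨0, ?_⟩
    rintro q ⟨n', k', hk', rfl, -⟩
    positivity
  constructor
  · apply csInf_le hbdd
    exact ⟨n, k, hk, rfl, hasCover_cube n k⟩
  · intro hodd
    have h := csInf_le hbdd ⟨n + 1, k + 1, by omega, rfl, hasCover_cube_odd n k hodd⟩
    convert h using 2 <;> push_cast <;> rfl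
end

section
/- Let k ≤ n < 2k with k even, and let 1 ≤ x ≤ n be an integer. Then Σ_{t odd} C(x,t)·C(n−x, k−t) ≤ C(n−1, k−1). -/
open Finset

/-- Odd-index Vandermonde-type sum. -/
def DD (a b k : ℕ) : ℕ :=
  ∑ t ∈ (Finset.range (k + 1)).filter (fun t => Odd t), a.choose t * b.choose (k - t)

/-- Even-index Vandermonde-type sum. -/
def GG (a b k : ℕ) : ℕ :=
  ∑ t ∈ (Finset.range (k + 1)).filter (fun t => Even t), a.choose t * b.choose (k - t)

lemma DD_zero_left (b k : ℕ) : DD 0 b k = 0 := by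
  apply Finset.sum_eq_zero
  intro t ht
  simp only [mem_filter, mem_range] at ht
  have : t ≠ 0 := by rcases ht.2 with ⟨m, hm⟩; omega
  rw [Nat.choose_eq_zero_of_lt (by omega)]
  ring

lemma GG_zero_left (b k : ℕ) : GG 0 b k = b.choose k := by
  rw [GG, Finset.sum_eq_single 0]
  · simp
  · intro t ht hne
    simp only [mem_filter, mem_range] at ht
    rw [Nat.choose_eq_zero_of_lt (by omega)]; ring
  · intro h
    exfalso; apply h; simp

lemma DD_zero_right (a k : ℕ) : DD a 0 k = if Odd k then a.choose k else 0 := by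
  by_cases hk : Odd k
  · simp only [hk, if_true]
    rw [DD, Finset.sum_eq_single k]
    · simp
    · intro t ht hne
      simp only [mem_filter, mem_range] at ht
      rw [Nat.choose_eq_zero_of_lt (show 0 < k - t by omega)]; ring
    · intro h
      exact absurd (by simp [hk] : k ∈ (Finset.range (k+1)).filter (fun t => Odd t)) h
  · simp only [hk, if_false]
    apply Finset.sum_eq_zero
    intro t ht
    simp only [mem_filter, mem_range] at ht
    have : t ≠ k := fun h => hk (h ▸ ht.2)
    rw [Nat.choose_eq_zero_of_lt (show 0 < k - t by omega)]; ring

lemma GG_zero_right (a k : ℕ) : GG a 0 k = if Even k then a.choose k else 0 := by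
  by_cases hk : Even k
  · simp only [hk, if_true]
    rw [GG, Finset.sum_eq_single k]
    · simp
    · intro t ht hne
      simp only [mem_filter, mem_range] at ht
      rw [Nat.choose_eq_zero_of_lt (show 0 < k - t by omega)]; ring
    · intro h
      exact absurd (by simp [hk] : k ∈ (Finset.range (k+1)).filter (fun t => Even t)) h
  · simp only [hk, if_false]
    apply Finset.sum_eq_zero
    intro t ht
    simp only [mem_filter, mem_range] at ht
    have : t ≠ k := fun h => hk (h ▸ ht.2)
    rw [Nat.choose_eq_zero_of_lt (show 0 < k - t by omega)]; ring

lemma DD_add_GG (a b k : ℕ) : DD a b k + GG a b k = (a + b).choose k := by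
  rw [DD, GG, Nat.add_choose_eq, Finset.Nat.sum_antidiagonal_eq_sum_range_succ_mk]
  rw [← Finset.sum_filter_add_sum_filter_not (Finset.range (k+1)) (fun t => Odd t)]
  congr 1
  apply Finset.sum_congr _ (fun _ _ => rfl)
  apply Finset.filter_congr
  intro t _
  simp [Nat.not_odd_iff_even]

lemma rec2_gen (p : ℕ → Prop) [DecidablePred p] (a b k : ℕ) :
    ∑ t ∈ (range (k+2)).filter p, a.choose t * (b+1).choose (k+1-t)
    = (∑ t ∈ (range (k+2)).filter p, a.choose t * b.choose (k+1-t))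
      + ∑ t ∈ (range (k+1)).filter p, a.choose t * b.choose (k-t) := by
  have hre : range (k+2) = insert (k+1) (range (k+1)) := Finset.range_add_one
  have hnotmem : (k+1) ∉ (range (k+1)).filter p := by simp
  have hcong : ∀ t ∈ (range (k+1)).filter p,
      a.choose t * (b+1).choose (k+1-t)
      = a.choose t * b.choose (k+1-t) + a.choose t * b.choose (k-t) := by
    intro t ht
    simp only [mem_filter, mem_range] at ht
    have h1 : k+1-t = (k-t)+1 := by omega
    rw [h1, Nat.choose_succ_succ]
    ring
  rw [hre, Finset.filter_insert]
  by_cases hp : p (k+1)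
  · rw [if_pos hp, Finset.sum_insert hnotmem, Finset.sum_insert hnotmem,
      Finset.sum_congr rfl hcong, Finset.sum_add_distrib]
    simp only [Nat.sub_self, Nat.choose_zero_right]
    ring
  · rw [if_neg hp, Finset.sum_congr rfl hcong, Finset.sum_add_distrib]

lemma rec2D (a b k : ℕ) : DD a (b+1) (k+1) = DD a b (k+1) + DD a b k := by
  exact rec2_gen (fun t => Odd t) a b k

lemma rec2G (a b k : ℕ) : GG a (b+1) (k+1) = GG a b (k+1) + GG a b k := by
  exact rec2_gen (fun t => Even t) a b k

lemma rec1D (a b k : ℕ) : DD (a+1) b (k+1) = DD a b (k+1) + GG a b k := by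
  induction b generalizing k with
  | zero =>
    rw [DD_zero_right, DD_zero_right, GG_zero_right]
    by_cases hk : Odd (k+1)
    · have hek : Even k := by rcases hk with ⟨m,hm⟩; exact ⟨m, by omega⟩
      simp only [hk, if_true, hek, if_true]
      rw [Nat.choose_succ_succ a k]; ring
    · have hek : ¬ Even k := by
        intro he; exact hk (by rcases he with ⟨m,hm⟩; exact ⟨m, by omega⟩)
      simp [hk, hek]
  | succ b ih =>
    match k with
    | 0 =>
      -- DD _ _ 1 : only t=1 term
      have h1 : ∀ c : ℕ, DD c (b+1) 1 = c.choose 1 * (b+1).choose 0 := by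
        intro c
        rw [DD]
        rw [show (range 2).filter (fun t => Odd t) = {1} by decide]
        simp
      rw [h1, h1, GG]
      rw [show (range 1).filter (fun t => Even t) = {0} by decide]
      simp [Nat.choose_succ_succ]
      omega
    | k+1 =>
      rw [rec2D, rec2D, rec2G, ih, ih]
      ring

lemma rec1G (a b k : ℕ) : GG (a+1) b (k+1) = GG a b (k+1) + DD a b k := by
  induction b generalizing k with
  | zero =>
    rw [GG_zero_right, GG_zero_right, DD_zero_right]
    by_cases hk : Even (k+1)
    · have hok : Odd k := by rcases hk with ⟨m,hm⟩; exact ⟨m-1, by omega⟩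
      simp only [hk, if_true, hok, if_true]
      rw [Nat.choose_succ_succ a k]; ring
    · have hok : ¬ Odd k := by
        intro he; exact hk (by rcases he with ⟨m,hm⟩; exact ⟨m+1, by omega⟩)
      simp [hk, hok]
  | succ b ih =>
    match k with
    | 0 =>
      have h1 : ∀ c : ℕ, GG c (b+1) 1 = c.choose 0 * (b+1).choose 1 := by
        intro c
        rw [GG]
        rw [show (range 2).filter (fun t => Even t) = {0} by decide]
        simp
      rw [h1, h1, DD]
      rw [show (range 1).filter (fun t => Odd t) = (∅ : Finset ℕ) by decide]
      simp
    | k+1 =>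
      rw [rec2G, rec2G, rec2D, ih, ih]
      ring

lemma swapDG (a b k : ℕ) :
    (Even k → (DD a b k = DD b a k ∧ GG a b k = GG b a k)) ∧
    (Odd k → (DD a b k = GG b a k ∧ GG a b k = DD b a k)) := by
  induction a generalizing b k with
  | zero =>
    constructor
    · intro hk
      have hok : ¬ Odd k := by simp [Nat.not_odd_iff_even, hk]
      constructor
      · rw [DD_zero_left, DD_zero_right, if_neg hok]
      · rw [GG_zero_left, GG_zero_right, if_pos hk]
    · intro hk
      have hek : ¬ Even k := by simp [Nat.not_even_iff_odd, hk]
      constructor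
      · rw [DD_zero_left, GG_zero_right, if_neg hek]
      · rw [GG_zero_left, DD_zero_right, if_pos hk]
  | succ a ih =>
    match k with
    | 0 =>
      constructor
      · intro _
        constructor
        · -- DD _ _ 0 = 0
          have h0 : ∀ c d : ℕ, DD c d 0 = 0 := by
            intro c d; rw [DD]
            rw [show (range 1).filter (fun t => Odd t) = (∅ : Finset ℕ) by decide]
            simp
          rw [h0, h0]
        · have h0 : ∀ c d : ℕ, GG c d 0 = 1 := by
            intro c d; rw [GG]
            rw [show (range 1).filter (fun t => Even t) = {0} by decide]
            simp
          rw [h0, h0]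
      · intro h; exact absurd h (by simp)
    | k+1 =>
      constructor
      · intro hk
        have hok : Odd k := Nat.Even.sub_odd (by omega) hk odd_one
        constructor
        · rw [rec1D, rec2D, ((ih b (k+1)).1 hk).1, ((ih b k).2 hok).2]
        · rw [rec1G, rec2G, ((ih b (k+1)).1 hk).2, ((ih b k).2 hok).1]
      · intro hk
        have hek : Even k := by
          rcases hk with ⟨m, hm⟩; exact ⟨m, by omega⟩
        constructor
        · rw [rec1D, rec2G, ((ih b (k+1)).2 hk).1, ((ih b k).1 hek).2]
        · rw [rec1G, rec2D, ((ih b (k+1)).2 hk).2, ((ih b k).1 hek).1]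

/-- Krawtchouk-type alternating sum. -/
def Kr (a b k : ℕ) : ℤ :=
  ∑ t ∈ range (k+1), (-1 : ℤ)^t * (a.choose t * b.choose (k-t) : ℕ)

lemma Kr_zero_k (a b : ℕ) : Kr a b 0 = 1 := by
  simp [Kr]

lemma GG_sub_DD (a b k : ℕ) : (GG a b k : ℤ) - (DD a b k : ℤ) = Kr a b k := by
  rw [Kr, ← Finset.sum_filter_add_sum_filter_not (range (k+1)) (fun t => Even t)]
  have h1 : ∑ t ∈ (range (k+1)).filter (fun t => Even t),
      (-1 : ℤ)^t * (a.choose t * b.choose (k-t) : ℕ) = (GG a b k : ℤ) := by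
    rw [GG, Nat.cast_sum]
    apply Finset.sum_congr rfl
    intro t ht
    simp only [mem_filter] at ht
    rw [ht.2.neg_one_pow]
    push_cast
    ring
  have h2 : ∑ t ∈ (range (k+1)).filter (fun t => ¬ Even t),
      (-1 : ℤ)^t * (a.choose t * b.choose (k-t) : ℕ) = -(DD a b k : ℤ) := by
    rw [DD, Nat.cast_sum, ← Finset.sum_neg_distrib]
    rw [show (range (k+1)).filter (fun t => ¬ Even t)
        = (range (k+1)).filter (fun t => Odd t) by
      apply Finset.filter_congr; intro t _; simp [Nat.not_even_iff_odd]]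
    apply Finset.sum_congr rfl
    intro t ht
    simp only [mem_filter] at ht
    rw [ht.2.neg_one_pow]
    push_cast
    ring
  rw [h1, h2]
  ring

lemma two_DD (a b k : ℕ) : 2 * (DD a b k : ℤ) = ((a+b).choose k : ℤ) - Kr a b k := by
  have h1 := GG_sub_DD a b k
  have h2 := DD_add_GG a b k
  have h3 : (DD a b k : ℤ) + (GG a b k : ℤ) = ((a+b).choose k : ℤ) := by exact_mod_cast h2
  linarith

lemma Kr_zero_left (b k : ℕ) : Kr 0 b k = (b.choose k : ℤ) := by
  rw [Kr, Finset.sum_eq_single 0]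
  · simp
  · intro t ht hne
    rw [Nat.choose_eq_zero_of_lt (by omega)]
    simp
  · intro h; exact absurd (by simp : (0:ℕ) ∈ range (k+1)) h

lemma Kr_zero_right (a k : ℕ) : Kr a 0 k = (-1)^k * (a.choose k : ℤ) := by
  rw [Kr, Finset.sum_eq_single k]
  · simp
  · intro t ht hne
    simp only [mem_range] at ht
    rw [Nat.choose_eq_zero_of_lt (show 0 < k - t by omega)]
    simp
  · intro h; exact absurd (by simp : k ∈ range (k+1)) h

lemma Kr_big (a b k : ℕ) (h : a + b < k) : Kr a b k = 0 := by
  apply Finset.sum_eq_zero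
  intro t ht
  simp only [mem_range] at ht
  by_cases hta : t ≤ a
  · rw [Nat.choose_eq_zero_of_lt (show b < k - t by omega)]
    simp
  · rw [Nat.choose_eq_zero_of_lt (show a < t by omega)]
    simp

lemma recP2 (a b k : ℕ) : Kr a (b+1) (k+1) = Kr a b (k+1) + Kr a b k := by
  have key : Kr a (b+1) (k+1) - Kr a b (k+1)
      = ∑ t ∈ range (k+2), (-1:ℤ)^t *
          ((a.choose t * (b+1).choose (k+1-t) : ℕ) - (a.choose t * b.choose (k+1-t) : ℕ) : ℤ) := by
    rw [Kr, Kr, ← Finset.sum_sub_distrib]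
    apply Finset.sum_congr rfl
    intro t _
    push_cast
    ring
  have key2 : ∀ t ∈ range (k+2), (-1:ℤ)^t *
          ((a.choose t * (b+1).choose (k+1-t) : ℕ) - (a.choose t * b.choose (k+1-t) : ℕ) : ℤ)
      = if t ≤ k then (-1:ℤ)^t * (a.choose t * b.choose (k-t) : ℕ) else 0 := by
    intro t ht
    simp only [mem_range] at ht
    by_cases htk : t ≤ k
    · rw [if_pos htk]
      have h1 : k+1-t = (k-t)+1 := by omega
      rw [h1, Nat.choose_succ_succ b (k-t)]
      push_cast
      ring
    · rw [if_neg htk]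
      have h1 : t = k+1 := by omega
      subst h1
      simp
  rw [Finset.sum_congr rfl key2, Finset.sum_ite, Finset.sum_const_zero, add_zero] at key
  have h3 : (range (k+2)).filter (fun t => t ≤ k) = range (k+1) := by
    ext t; simp only [mem_filter, mem_range]; omega
  rw [h3] at key
  rw [← Kr] at key
  linarith

lemma recP1 (a b k : ℕ) : Kr (a+1) b (k+1) = Kr a b (k+1) - Kr a b k := by
  induction b generalizing k with
  | zero =>
    rw [Kr_zero_right, Kr_zero_right, Kr_zero_right, Nat.choose_succ_succ a k]
    push_cast
    ring
  | succ b ih =>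
    match k with
    | 0 =>
      have e1 := recP2 (a+1) b 0
      have e2 := recP2 a b 0
      have i1 := ih 0
      rw [Kr_zero_k] at *
      linarith
    | k+1 =>
      have e1 := recP2 (a+1) b (k+1)
      have e2 := recP2 a b (k+1)
      have e3 := recP2 a b k
      have i1 := ih (k+1)
      have i2 := ih k
      linarith

lemma neg_one_pow_sub (a k : ℕ) (h : k ≤ a) : (-1:ℤ)^(a-k) = (-1)^a * (-1)^k := by
  rcases Nat.even_or_odd a with ha | ha <;> rcases Nat.even_or_odd k with hk2 | hk2
  · have h2 : Even (a-k) := by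
      rcases ha with ⟨r,hr⟩; rcases hk2 with ⟨s,hs⟩; exact ⟨r-s, by omega⟩
    rw [h2.neg_one_pow, ha.neg_one_pow, hk2.neg_one_pow]; ring
  · have h2 : Odd (a-k) := by
      rcases ha with ⟨r,hr⟩; rcases hk2 with ⟨s,hs⟩; exact ⟨r-s-1, by omega⟩
    rw [h2.neg_one_pow, ha.neg_one_pow, hk2.neg_one_pow]; ring
  · have h2 : Odd (a-k) := by
      rcases ha with ⟨r,hr⟩; rcases hk2 with ⟨s,hs⟩; exact ⟨r-s, by omega⟩
    rw [h2.neg_one_pow, ha.neg_one_pow, hk2.neg_one_pow]; ring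
  · have h2 : Even (a-k) := by
      rcases ha with ⟨r,hr⟩; rcases hk2 with ⟨s,hs⟩; exact ⟨r-s, by omega⟩
    rw [h2.neg_one_pow, ha.neg_one_pow, hk2.neg_one_pow]; ring

lemma reflKr (a : ℕ) : ∀ b k : ℕ, k ≤ a + b → Kr a b (a + b - k) = (-1)^a * Kr a b k := by
  intro b
  induction b with
  | zero =>
    intro k hk
    simp only [Nat.add_zero] at *
    rw [Kr_zero_right, Kr_zero_right, Nat.choose_symm hk, neg_one_pow_sub a k hk]
    ring
  | succ b ih =>
    intro k hk
    by_cases hk0 : k = 0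
    · subst hk0
      have h1 : a + (b+1) - 0 = (a + b) + 1 := by omega
      rw [h1, Kr_zero_k]
      have h2 : Kr a (b+1) (a+b+1) = Kr a b (a+b+1) + Kr a b (a+b) := recP2 a b (a+b)
      have h3 : Kr a b (a+b+1) = 0 := Kr_big a b (a+b+1) (by omega)
      have h4 : Kr a b (a+b) = (-1)^a * Kr a b 0 := by
        have := ih 0 (by omega)
        simpa using this
      rw [Kr_zero_k] at h4
      have h5 : (-1:ℤ)^a * (-1)^a = 1 := by
        rw [← pow_add]
        exact Even.neg_one_pow ⟨a, by omega⟩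
      rw [h2, h3, h4]
      rw [mul_one]
      linarith [mul_self_nonneg ((-1:ℤ)^a)]
    · rcases Nat.exists_eq_succ_of_ne_zero hk0 with ⟨k', rfl⟩
      by_cases htop : k' + 1 = a + b + 1
      · -- k = a+b+1 : LHS = Kr a (b+1) 0 = 1
        have hss : k'.succ = k' + 1 := rfl
        rw [hss, htop]
        have hz : a + (b+1) - (a+b+1) = 0 := by omega
        rw [hz, Kr_zero_k]
        have h2 : Kr a (b+1) (a+b+1) = Kr a b (a+b+1) + Kr a b (a+b) := recP2 a b (a+b)
        have h3 : Kr a b (a+b+1) = 0 := Kr_big a b (a+b+1) (by omega)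
        have h4 : Kr a b (a+b) = (-1)^a * Kr a b 0 := by
          have := ih 0 (by omega)
          simpa using this
        rw [Kr_zero_k, mul_one] at h4
        have h5 : (-1:ℤ)^a * (-1)^a = 1 := by
          rw [← pow_add]
          exact Even.neg_one_pow ⟨a, by omega⟩
        rw [h2, h3, h4]
        linarith [h5]
      · -- 1 ≤ k = k'+1 ≤ a+b
        have hkab : k' + 1 ≤ a + b := by omega
        have h1 : a + (b+1) - (k'+1) = (a + b - k') := by omega
        have h2 : a + b - k' = (a + b - (k'+1)) + 1 := by omega
        rw [h1, h2]
        have h3 : Kr a (b+1) ((a+b-(k'+1))+1)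
            = Kr a b ((a+b-(k'+1))+1) + Kr a b (a+b-(k'+1)) := recP2 a b (a+b-(k'+1))
        rw [h3, ← h2, ih k' (by omega), ih (k'+1) hkab, recP2 a b k']
        ring

/-- `KB j x = Kr x (2j-1-x) j` : Krawtchouk value on `n = 2j-1` points. -/
def KB (j x : ℕ) : ℤ := Kr x (2*j - 1 - x) j

lemma recB (i x y : ℕ) (hy : x + y = 2*i+1) :
    KB (i+2) (x+1) = KB (i+2) x - 2*(1+(-1:ℤ)^x) * KB (i+1) x := by
  have h1 : 2*(i+2)-1-(x+1) = y+1 := by omega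
  have h2 : 2*(i+2)-1-x = y+2 := by omega
  have h3 : 2*(i+1)-1-x = y := by omega
  rw [KB, KB, KB, h1, h2, h3]
  have e1 : Kr (x+1) (y+1) (i+2) = Kr x (y+1) (i+2) - Kr x (y+1) (i+1) := recP1 x (y+1) (i+1)
  have e2 : Kr x (y+2) (i+2) = Kr x (y+1) (i+2) + Kr x (y+1) (i+1) := recP2 x (y+1) (i+1)
  have e3 : Kr x (y+1) (i+1) = Kr x y (i+1) + Kr x y i := recP2 x y i
  have e4 : Kr x y i = (-1)^x * Kr x y (i+1) := by
    have hh := reflKr x y (i+1) (by omega)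
    rw [show x + y - (i+1) = i by omega] at hh
    exact hh
  rw [e1, e2, e3, e4]
  ring

lemma KB_zero (v : ℕ) : KB v 0 = ((2*v-1).choose v : ℤ) := by
  rw [KB, Nat.sub_zero, Kr_zero_left]

lemma central_double (w : ℕ) : (2*w+2).choose (w+1) = 2 * ((2*w+1).choose (w+1)) := by
  have h1 : (2*w+2).choose (w+1) = (2*w+1).choose w + (2*w+1).choose (w+1) := by
    rw [show 2*w+2 = (2*w+1)+1 from rfl]
    exact Nat.choose_succ_succ (2*w+1) w
  have h2 : (2*w+1).choose w = (2*w+1).choose (w+1) := by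
    have hs := Nat.choose_symm (show w+1 ≤ 2*w+1 by omega)
    rw [show (2*w+1) - (w+1) = w by omega] at hs
    exact hs
  omega

lemma FW : ∀ (u v j : ℕ), j = u + v → 1 ≤ v →
    2 * (u.factorial : ℤ) * v.factorial * j.factorial * ((-1:ℤ)^u * KB j (2*u))
      = ((2*u).factorial : ℤ) * (2*v).factorial := by
  intro u
  induction u with
  | zero =>
    intro v j hj hv
    subst hj
    obtain ⟨w, rfl⟩ : ∃ w, v = w + 1 := ⟨v - 1, by omega⟩
    simp only [Nat.zero_add, Nat.mul_zero, pow_zero, one_mul, Nat.factorial_zero, Nat.cast_one]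
    rw [KB_zero]
    have h3 : 2*(w+1)-1 = 2*w+1 := by omega
    rw [h3]
    have h4 := Nat.choose_mul_factorial_mul_factorial (show w+1 ≤ 2*w+2 by omega)
    rw [show (2*w+2) - (w+1) = w+1 by omega, central_double] at h4
    have h5 : 2*(w+1) = 2*w+2 := by ring
    rw [h5]
    have := congrArg (fun z : ℕ => (z : ℤ)) h4
    push_cast at this ⊢
    linarith
  | succ u ih =>
    intro v j hj hv
    subst hj
    have hidx : u + 1 + v = u + v + 1 := by omega
    rw [hidx]
    obtain ⟨w, rfl⟩ : ∃ w, v = w + 1 := ⟨v - 1, by omega⟩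
    -- j = u + w + 2
    have E1 := ih (w+2) (u+w+2) (by omega) (by omega)
    have E2 := ih (w+1) (u+w+1) rfl (by omega)
    have rel1 : KB (u+w+2) (2*u+2) = KB (u+w+2) (2*u+1) := by
      have hrec := recB (u+w) (2*u+1) (2*w) (by omega)
      have hodd : (-1:ℤ)^(2*u+1) = -1 := Odd.neg_one_pow ⟨u, by omega⟩
      rw [hodd] at hrec
      rw [show u+w+2 = u+w+2 from rfl] at hrec
      simpa using hrec
    have rel2 : KB (u+w+2) (2*u+1) = KB (u+w+2) (2*u) - 4 * KB (u+w+1) (2*u) := by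
      have hrec := recB (u+w) (2*u) (2*w+1) (by omega)
      have heven : (-1:ℤ)^(2*u) = 1 := Even.neg_one_pow ⟨u, by omega⟩
      rw [heven] at hrec
      linarith [hrec]
    have hgoalidx : 2*(u+1) = 2*u+2 := by ring
    have hidx2 : u + (w+1) + 1 = u + w + 2 := by omega
    rw [hgoalidx, hidx2, rel1, rel2]
    -- factorial expansions
    have f1 : ((u+1).factorial : ℤ) = (u+1) * u.factorial := by
      rw [Nat.factorial_succ]; push_cast; ring
    have f2 : ((w+2).factorial : ℤ) = (w+2) * (w+1).factorial := by
      rw [Nat.factorial_succ]; push_cast; ring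
    have f3 : ((u+w+2).factorial : ℤ) = (u+w+2) * (u+w+1).factorial := by
      rw [Nat.factorial_succ]; push_cast; ring
    have f4 : ((2*u+2).factorial : ℤ) = (2*u+2)*(2*u+1)*(2*u).factorial := by
      rw [show 2*u+2 = (2*u+1)+1 from rfl, Nat.factorial_succ, Nat.factorial_succ]
      push_cast; ring
    have f5 : ((2*(w+2)).factorial : ℤ) = (2*w+4)*(2*w+3)*(2*(w+1)).factorial := by
      rw [show 2*(w+2) = (2*(w+1)+1)+1 by ring, Nat.factorial_succ, Nat.factorial_succ]
      push_cast; ring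
    have hpow : (-1:ℤ)^(u+1) = -((-1:ℤ)^u) := by
      rw [pow_succ]; ring
    rw [f1, f3, f4, hpow]
    rw [f2, f3, f5] at E1
    -- E1 currently about KB (u+w+2) (2*u) : good
    have key : ((w+2 : ℤ)) * (2 * ((u+1) * (u.factorial:ℤ)) * (w+1).factorial * ((u+w+2) * ((u+w+1).factorial:ℤ)) *
        (-((-1:ℤ)^u) * (KB (u+w+2) (2*u) - 4 * KB (u+w+1) (2*u))))
        = (w+2) * (((2*u+2)*(2*u+1)*((2*u).factorial:ℤ)) * ((2*(w+1)).factorial : ℤ)) := by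
      linear_combination (-((u:ℤ)+1)) * E1 + (4*((u:ℤ)+1)*((w:ℤ)+2)*((u:ℤ)+(w:ℤ)+2)) * E2
    have hw2 : (w+2 : ℤ) ≠ 0 := by positivity
    have hcan := mul_left_cancel₀ hw2 key
    linear_combination hcan

lemma Xpos (u v j : ℕ) (hj : j = u + v) (hv : 1 ≤ v) :
    0 < (-1:ℤ)^u * KB j (2*u) := by
  have E := FW u v j hj hv
  have p1 : (0:ℤ) < u.factorial := by exact_mod_cast u.factorial_pos
  have p2 : (0:ℤ) < v.factorial := by exact_mod_cast v.factorial_pos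
  have p3 : (0:ℤ) < j.factorial := by exact_mod_cast j.factorial_pos
  have p4 : (0:ℤ) < (2*u).factorial := by exact_mod_cast (2*u).factorial_pos
  have p5 : (0:ℤ) < (2*v).factorial := by exact_mod_cast (2*v).factorial_pos
  by_contra hcon
  push_neg at hcon
  have hm : (0:ℤ) < 2 * (u.factorial : ℤ) * v.factorial * j.factorial := by positivity
  have h2 := mul_nonpos_of_nonneg_of_nonpos hm.le hcon
  rw [E] at h2
  nlinarith [mul_pos p4 p5]

lemma Xsym (u v j : ℕ) (hj : j = u + v) (hu : 1 ≤ u) (hv : 1 ≤ v) :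
    (-1:ℤ)^u * KB j (2*u) = (-1:ℤ)^v * KB j (2*v) := by
  have E1 := FW u v j hj hv
  have E2 := FW v u j (by omega) hu
  have p1 : (0:ℤ) < u.factorial := by exact_mod_cast u.factorial_pos
  have p2 : (0:ℤ) < v.factorial := by exact_mod_cast v.factorial_pos
  have p3 : (0:ℤ) < j.factorial := by exact_mod_cast j.factorial_pos
  have hm : (2 * (u.factorial : ℤ) * v.factorial * j.factorial) ≠ 0 := by positivity
  apply mul_left_cancel₀ hm
  rw [E1]
  linear_combination -E2

lemma Xdec (u c j : ℕ) (hj : j = u + 2 + c) (hu : 1 ≤ u) (huc : u ≤ c + 1) :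
    (-1:ℤ)^(u+1) * KB j (2*(u+1)) ≤ (-1:ℤ)^u * KB j (2*u) := by
  have Eu := FW u (c+2) j (by omega) (by omega)
  have Eu1 := FW (u+1) (c+1) j (by omega) (by omega)
  set X := (-1:ℤ)^u * KB j (2*u) with hX
  set Y := (-1:ℤ)^(u+1) * KB j (2*(u+1)) with hY
  have f1 : ((u+1).factorial : ℤ) = (u+1) * u.factorial := by
    rw [Nat.factorial_succ]; push_cast; ring
  have f2 : ((c+2).factorial : ℤ) = (c+2) * (c+1).factorial := by
    rw [Nat.factorial_succ]; push_cast; ring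
  have f3 : ((2*(u+1)).factorial : ℤ) = (2*u+2)*(2*u+1)*(2*u).factorial := by
    rw [show 2*(u+1) = (2*u+1)+1 by ring, Nat.factorial_succ, Nat.factorial_succ]
    push_cast; ring
  have f4 : ((2*(c+2)).factorial : ℤ) = (2*c+4)*(2*c+3)*(2*(c+1)).factorial := by
    rw [show 2*(c+2) = (2*(c+1)+1)+1 by ring, Nat.factorial_succ, Nat.factorial_succ]
    push_cast; ring
  rw [f2, f4] at Eu
  rw [f1, f3] at Eu1
  -- M := 2*(u+1)!*(c+2)!*j!  (in expanded form)
  have hA : 2 * (((u:ℤ)+1) * u.factorial) * (((c:ℤ)+2) * (c+1).factorial) * j.factorial * X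
      = ((u:ℤ)+1) * ((2*u).factorial * ((2*c+4)*(2*c+3)*((2*(c+1)).factorial))) := by
    linear_combination ((u:ℤ)+1) * Eu
  have hB : 2 * (((u:ℤ)+1) * u.factorial) * (((c:ℤ)+2) * (c+1).factorial) * j.factorial * Y
      = ((c:ℤ)+2) * (((2*u+2)*(2*u+1)*(2*u).factorial) * ((2*(c+1)).factorial)) := by
    linear_combination ((c:ℤ)+2) * Eu1
  have p1 : (0:ℤ) < u.factorial := by exact_mod_cast u.factorial_pos
  have p2 : (0:ℤ) < (c+1).factorial := by exact_mod_cast (c+1).factorial_pos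
  have p3 : (0:ℤ) < j.factorial := by exact_mod_cast j.factorial_pos
  have p4 : (0:ℤ) < (2*u).factorial := by exact_mod_cast (2*u).factorial_pos
  have p5 : (0:ℤ) < (2*(c+1)).factorial := by exact_mod_cast (2*(c+1)).factorial_pos
  have hM : (0:ℤ) < 2 * (((u:ℤ)+1) * u.factorial) * (((c:ℤ)+2) * (c+1).factorial) * j.factorial := by
    have hu1 : (0:ℤ) < (u:ℤ)+1 := by positivity
    have hc1 : (0:ℤ) < (c:ℤ)+2 := by positivity
    positivity
  have hucz : (u:ℤ) ≤ (c:ℤ) + 1 := by exact_mod_cast huc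
  have hstep : (2*((c:ℤ)+2)*((u:ℤ)+1)) * (2*(u:ℤ)+1)
      ≤ (2*((c:ℤ)+2)*((u:ℤ)+1)) * (2*(c:ℤ)+3) :=
    mul_le_mul_of_nonneg_left (by linarith) (by positivity)
  have hscal : ((c:ℤ)+2) * ((2*(u:ℤ)+2)*(2*(u:ℤ)+1)) ≤ ((u:ℤ)+1) * ((2*(c:ℤ)+4)*(2*(c:ℤ)+3)) := by
    calc ((c:ℤ)+2) * ((2*(u:ℤ)+2)*(2*(u:ℤ)+1))
        = (2*((c:ℤ)+2)*((u:ℤ)+1)) * (2*(u:ℤ)+1) := by ring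
      _ ≤ (2*((c:ℤ)+2)*((u:ℤ)+1)) * (2*(c:ℤ)+3) := hstep
      _ = ((u:ℤ)+1) * ((2*(c:ℤ)+4)*(2*(c:ℤ)+3)) := by ring
  have hq : (0:ℤ) ≤ ((2*u).factorial : ℤ) * ((2*(c+1)).factorial : ℤ) := by positivity
  have hcmp : ((c:ℤ)+2) * (((2*(u:ℤ)+2)*(2*(u:ℤ)+1)*(2*u).factorial) * ((2*(c+1)).factorial))
      ≤ ((u:ℤ)+1) * (((2*u).factorial : ℤ) * ((2*(c:ℤ)+4)*(2*(c:ℤ)+3)*((2*(c+1)).factorial))) := by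
    calc ((c:ℤ)+2) * (((2*(u:ℤ)+2)*(2*(u:ℤ)+1)*(2*u).factorial) * ((2*(c+1)).factorial))
        = (((c:ℤ)+2) * ((2*(u:ℤ)+2)*(2*(u:ℤ)+1))) * (((2*u).factorial :ℤ) * ((2*(c+1)).factorial:ℤ)) := by
          ring
      _ ≤ (((u:ℤ)+1) * ((2*(c:ℤ)+4)*(2*(c:ℤ)+3))) * (((2*u).factorial:ℤ) * ((2*(c+1)).factorial:ℤ)) :=
          mul_le_mul_of_nonneg_right hscal hq
      _ = ((u:ℤ)+1) * (((2*u).factorial : ℤ) * ((2*(c:ℤ)+4)*(2*(c:ℤ)+3)*((2*(c+1)).factorial))) := by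
          ring
  have hfin : 2 * (((u:ℤ)+1) * u.factorial) * (((c:ℤ)+2) * (c+1).factorial) * j.factorial * Y
      ≤ 2 * (((u:ℤ)+1) * u.factorial) * (((c:ℤ)+2) * (c+1).factorial) * j.factorial * X := by
    rw [hA, hB]
    linarith [hcmp]
  exact le_of_mul_le_mul_left hfin hM

lemma Xle1 (j : ℕ) : ∀ u, 1 ≤ u → 2*u ≤ j+1 →
    (-1:ℤ)^u * KB j (2*u) ≤ (-1:ℤ)^1 * KB j (2*1) := by
  intro u
  induction u with
  | zero => intro h; omega
  | succ u ihu =>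
    intro _ h2
    by_cases hu0 : u = 0
    · subst hu0; exact le_refl _
    · have h1 : (-1:ℤ)^(u+1) * KB j (2*(u+1)) ≤ (-1:ℤ)^u * KB j (2*u) := by
        apply Xdec u (j - u - 2) j (by omega) (by omega) (by omega)
      exact le_trans h1 (ihu (by omega) (by omega))

lemma Xmax (j u : ℕ) (hu : 1 ≤ u) (huj : u ≤ j - 1) (hj : 2 ≤ j) :
    (-1:ℤ)^u * KB j (2*u) ≤ (-1:ℤ)^1 * KB j (2*1) := by
  by_cases hcase : 2*u ≤ j+1
  · exact Xle1 j u hu hcase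
  · have hsym := Xsym u (j-u) j (by omega) hu (by omega)
    rw [hsym]
    exact Xle1 j (j-u) (by omega) (by omega)

lemma KBpair (k u : ℕ) (hk : 2 ≤ k) (hu : 1 ≤ u) (hu2 : u ≤ k-1) :
    KB k (2*u) = KB k (2*u-1) := by
  have hrec := recB (k-2) (2*u-1) (2*k-2-2*u) (by omega)
  have hodd : (-1:ℤ)^(2*u-1) = -1 := Odd.neg_one_pow ⟨u-1, by omega⟩
  rw [hodd] at hrec
  rw [show (k-2)+2 = k by omega, show (2*u-1)+1 = 2*u by omega] at hrec
  rw [hrec]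
  ring

lemma X1val (k : ℕ) (hk : 2 ≤ k) :
    (-1:ℤ)^1 * KB k (2*1) = ((2*k-2).choose (k-1) : ℤ) - ((2*k-2).choose k : ℤ) := by
  have hp := KBpair k 1 hk le_rfl (by omega)
  have hrec := recB (k-2) 0 (2*k-3) (by omega)
  rw [pow_zero, show (k-2)+2 = k by omega, show (0:ℕ)+1 = 1 from rfl, show (k-2)+1 = k-1 by omega] at hrec
  rw [KB_zero, KB_zero] at hrec
  have h1 : (2*k-1).choose k = (2*k-2).choose (k-1) + (2*k-2).choose k := by
    have := Nat.choose_succ_succ (2*k-2) (k-1)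
    simp only [Nat.succ_eq_add_one] at this
    rw [show (2*k-2)+1 = 2*k-1 by omega, show (k-1)+1 = k by omega] at this
    exact this
  have h2 : (2*k-2).choose (k-1) = 2 * ((2*k-3).choose (k-1)) := by
    have := central_double (k-2)
    rw [show 2*(k-2)+2 = 2*k-2 by omega, show (k-2)+1 = k-1 by omega,
      show 2*(k-2)+1 = 2*k-3 by omega] at this
    exact this
  rw [show 2*1 = 2 by ring, hp, show (2:ℕ) - 1 = 1 from rfl]
  rw [show 2*(k-1)-1 = 2*k-3 by omega] at hrec
  have h1z : ((2*k-1).choose k : ℤ) = ((2*k-2).choose (k-1) : ℤ) + ((2*k-2).choose k : ℤ) := by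
    exact_mod_cast h1
  have h2z : ((2*k-2).choose (k-1) : ℤ) = 2 * ((2*k-3).choose (k-1) : ℤ) := by
    exact_mod_cast h2
  rw [hrec]
  push_cast at h1z h2z ⊢
  linarith

lemma chooseIneq (k : ℕ) (hk : 2 ≤ k) : (2*k-2).choose k ≤ (2*k-2).choose (k-1) := by
  have h1 := Nat.choose_symm (show k ≤ 2*k-2 by omega)
  rw [show (2*k-2) - k = k-2 by omega] at h1
  have h2 := Nat.choose_le_succ_of_lt_half_left (show k-2 < (2*k-2)/2 by omega)
  rw [show (k-2)+1 = k-1 by omega] at h2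
  omega

lemma MstarKB (k x : ℕ) (hx : 1 ≤ x) (hx2 : x ≤ 2*k-2) :
    ((2*k-2).choose k : ℤ) - ((2*k-2).choose (k-1) : ℤ) ≤ KB k x := by
  have hk : 2 ≤ k := by omega
  obtain ⟨u, hux, hu1, hu2⟩ : ∃ u, (x = 2*u ∨ x = 2*u - 1) ∧ 1 ≤ u ∧ u ≤ k-1 :=
    ⟨(x+1)/2, by omega, by omega, by omega⟩
  have hmain : ((2*k-2).choose k : ℤ) - ((2*k-2).choose (k-1) : ℤ) ≤ KB k (2*u) := by
    rcases Nat.even_or_odd u with he | ho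
    · have hpos := Xpos u (k-u) k (by omega) (by omega)
      rw [he.neg_one_pow, one_mul] at hpos
      have hle : ((2*k-2).choose k : ℤ) ≤ ((2*k-2).choose (k-1) : ℤ) := by
        exact_mod_cast chooseIneq k hk
      linarith
    · have hlt := Xmax k u hu1 hu2 hk
      rw [X1val k hk] at hlt
      rw [ho.neg_one_pow, neg_one_mul] at hlt
      linarith
  rcases hux with h | h
  · rw [h]; exact hmain
  · rw [h, ← KBpair k u hk hu1 hu2]; exact hmain

lemma MstarD (k x : ℕ) (hk : 1 ≤ k) (hx2 : x ≤ 2*k-2) :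
    DD x (2*k-1-x) k ≤ (2*k-2).choose (k-1) := by
  by_cases hx0 : x = 0
  · subst hx0; rw [DD_zero_left]; exact Nat.zero_le _
  · have hx1 : 1 ≤ x := by omega
    have hk2 : 2 ≤ k := by omega
    have htw := two_DD x (2*k-1-x) k
    rw [show x + (2*k-1-x) = 2*k-1 by omega] at htw
    have hKr : Kr x (2*k-1-x) k = KB k x := rfl
    rw [hKr] at htw
    have hks := MstarKB k x hx1 hx2
    have h1 : ((2*k-1).choose k : ℤ) = ((2*k-2).choose (k-1) : ℤ) + ((2*k-2).choose k : ℤ) := by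
      have := Nat.choose_succ_succ (2*k-2) (k-1)
      simp only [Nat.succ_eq_add_one] at this
      rw [show (2*k-2)+1 = 2*k-1 by omega, show (k-1)+1 = k by omega] at this
      exact_mod_cast this
    have : (DD x (2*k-1-x) k : ℤ) ≤ ((2*k-2).choose (k-1) : ℤ) := by linarith
    exact_mod_cast this

lemma chooseDesc (b k : ℕ) (h : b ≤ 2*k+1) : b.choose (k+1) ≤ b.choose k := by
  rcases le_or_gt b k with hbk | hbk
  · rw [Nat.choose_eq_zero_of_lt (by omega)]; exact Nat.zero_le _
  · by_cases htop : b = 2*k+1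
    · subst htop
      have hs := Nat.choose_symm (show k+1 ≤ 2*k+1 by omega)
      rw [show 2*k+1-(k+1) = k by omega] at hs
      omega
    · have h1 := Nat.choose_symm (show k+1 ≤ b by omega)
      have h2 := Nat.choose_symm (show k ≤ b by omega)
      have h3 : b - (k+1) < b/2 := by omega
      have h4 := Nat.choose_le_succ_of_lt_half_left h3
      rw [show (b-(k+1))+1 = b-k by omega] at h4
      omega

lemma wallDG (k a b : ℕ) (hk : 1 ≤ k) (hab : a + b = 2*k-2) :
    (Even k → DD a b k ≤ DD a b (k-1)) ∧ (Odd k → GG a b k ≤ GG a b (k-1)) := by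
  have hkey : DD b (a+1) k ≤ (2*k-2).choose (k-1) := by
    have := MstarD k b hk (by omega)
    rw [show 2*k-1-b = a+1 by omega] at this
    exact this
  have hrec := rec2D b a (k-1)
  rw [show (k-1)+1 = k by omega] at hrec
  have hvand := DD_add_GG b a (k-1)
  rw [show b + a = 2*k-2 by omega] at hvand
  constructor
  · intro hek
    have hok : Odd (k-1) := Nat.Even.sub_odd (by omega) hek odd_one
    have hsw1 : DD a b k = DD b a k := ((swapDG a b k).1 hek).1
    have hsw2 : DD a b (k-1) = GG b a (k-1) := ((swapDG a b (k-1)).2 hok).1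
    omega
  · intro hok
    have hek : Even (k-1) := Nat.Odd.sub_odd hok odd_one
    have hsw1 : GG a b k = DD b a k := ((swapDG a b k).2 hok).2
    have hsw2 : GG a b (k-1) = GG b a (k-1) := ((swapDG a b (k-1)).1 hek).2
    omega

lemma claimDG : ∀ k, 1 ≤ k → ∀ a b, a + b ≤ 2*k-2 →
    (Even k → DD a b k ≤ DD a b (k-1)) ∧ (Odd k → GG a b k ≤ GG a b (k-1)) := by
  intro k
  induction k with
  | zero => omega
  | succ k ihk =>
    intro _ a
    induction a with
    | zero =>
      intro b hb
      constructor
      · intro _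
        rw [DD_zero_left]
        exact Nat.zero_le _
      · intro _
        rw [GG_zero_left, GG_zero_left, Nat.add_sub_cancel]
        exact chooseDesc b k (by omega)
    | succ a iha =>
      intro b hb
      by_cases hwall : (a+1) + b = 2*(k+1)-2
      · exact wallDG (k+1) (a+1) b (by omega) hwall
      · have hb' : a + b ≤ 2*(k+1)-2 := by omega
        have hb'' : a + b ≤ 2*k-2 := by omega
        rw [Nat.add_sub_cancel]
        constructor
        · intro hek
          have hk1 : 1 ≤ k := by
            by_contra hc
            have : k = 0 := by omega
            subst this
            exact (Nat.not_even_iff_odd.mpr odd_one) hek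
          have hok : Odd k := Nat.Even.sub_odd (by omega) hek odd_one
          have r1 := rec1D a b k
          have r2 := rec1D a b (k-1)
          rw [show (k-1)+1 = k by omega] at r2
          have i1 := (iha b hb').1 hek
          rw [Nat.add_sub_cancel] at i1
          have i2 := (ihk hk1 a b hb'').2 hok
          omega
        · intro hok1
          have hek : Even k := by
            rcases hok1 with ⟨m, hm⟩; exact ⟨m, by omega⟩
          by_cases hk1 : 1 ≤ k
          · have r1 := rec1G a b k
            have r2 := rec1G a b (k-1)
            rw [show (k-1)+1 = k by omega] at r2
            have i1 := (iha b hb').2 hok1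
            rw [Nat.add_sub_cancel] at i1
            have i2 := (ihk hk1 a b hb'').1 hek
            omega
          · -- k = 0 : k+1 = 1, a+b ≤ 0 contradicts a = a+1 ≥ 1? a+b ≤ 2*1-2 = 0, but a+1 ≥ 1 means hb : (a+1)+b ≤ 0 false
            omega

/-- For `k ≤ n < 2k`, `k` even, and `1 ≤ x ≤ n`:
`Σ_{t odd} C(x,t)·C(n−x,k−t) ≤ C(n−1,k−1)`. -/
theorem binom_odd_sum_le (n k x : ℕ) (hkn : k ≤ n) (hn : n < 2 * k) (hk : Even k)
    (hx1 : 1 ≤ x) (hxn : x ≤ n) :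
    ∑ t ∈ (Finset.range (k + 1)).filter (fun t => Odd t),
        x.choose t * (n - x).choose (k - t) ≤ (n - 1).choose (k - 1) := by
  show DD x (n - x) k ≤ (n - 1).choose (k - 1)
  have hk1 : 1 ≤ k := by
    rcases Nat.eq_zero_or_pos k with h | h
    · omega
    · exact h
  obtain ⟨a, ha⟩ : ∃ a, x = a + 1 := ⟨x - 1, by omega⟩
  set b := n - x with hb
  have hab : a + b = n - 1 := by omega
  have r1 := rec1D a b (k-1)
  rw [show (k-1)+1 = k by omega] at r1
  have hvand := DD_add_GG a b (k-1)
  have hclaim := (claimDG k hk1 a b (by omega)).1 hk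
  rw [ha, hab] at *
  omega
end

section
/- The graph Q_n^{=k} (vertices {0,1}^n, edges exactly at Hamming distance k), with k even and k ≤ n < 2k, has smallest adjacency eigenvalue equal to C(n,k)·(1 − 2k/n), attained by the character corresponding to a weight-1 vector. -/
attribute [local instance] Classical.propDecidable

/-- The graph `Q_n^{=k}` on `{0,1}^n`, with edges exactly at Hamming distance `k`. -/
def cubeEqGraph (n k : ℕ) : SimpleGraph (Fin n → Bool) :=
  SimpleGraph.fromRel (fun x y => hammingDist x y = k)

open Finset

section helpers
variable {R : Type*} [Monoid R] [HasDistribNeg R]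

lemma negpow_mod (a b : ℕ) (h : a % 2 = b % 2) : (-1:R)^a = (-1:R)^b := by
  rcases Nat.even_or_odd a with ha | ha
  · have hb : Even b := by rw [Nat.even_iff] at *; omega
    rw [ha.neg_one_pow, hb.neg_one_pow]
  · have hb : Odd b := by rw [Nat.odd_iff] at *; omega
    rw [ha.neg_one_pow, hb.neg_one_pow]

end helpers

section symmdiff
variable {α : Type*} [DecidableEq α]

lemma card_symmDiff' (A B : Finset α) : (symmDiff A B).card + 2*(A ∩ B).card = A.card + B.card := by
  have h1 : (symmDiff A B) = (A \ B) ∪ (B \ A) := by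
    ext i; simp [Finset.mem_symmDiff]
  have hd : Disjoint (A \ B) (B \ A) := by
    simp [Finset.disjoint_left]; tauto
  have h2 := Finset.card_inter_add_card_sdiff A B
  have h3 := Finset.card_inter_add_card_sdiff B A
  rw [h1, Finset.card_union_of_disjoint hd]
  rw [Finset.inter_comm] at h3
  omega

lemma inter_symmDiff' (S A B : Finset α) : S ∩ (symmDiff A B) = symmDiff (S ∩ A) (S ∩ B) := by
  ext i; simp [Finset.mem_symmDiff]; tauto

lemma negpow_inter_symmDiff (S A B : Finset α) :
    (-1:ℝ)^((S ∩ (symmDiff A B)).card) = (-1:ℝ)^((S ∩ A).card) * (-1:ℝ)^((S ∩ B).card) := by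
  rw [inter_symmDiff', ← pow_add]
  apply negpow_mod
  have := card_symmDiff' (S ∩ A) (S ∩ B)
  omega

end symmdiff

section KKdef
variable {α : Type*} [DecidableEq α]

/-- Krawtchouk-type character sum over `k`-subsets of `U`. -/
def KK (U : Finset α) (k : ℕ) (S : Finset α) : ℤ :=
  ∑ Z ∈ U.powersetCard k, (-1)^((Z ∩ S).card)

lemma KK_empty (U : Finset α) (k : ℕ) : KK U k ∅ = (U.card.choose k : ℤ) := by
  unfold KK
  simp [Finset.card_powersetCard]

lemma KK_zero (U : Finset α) (S : Finset α) : KK U 0 S = 1 := by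
  unfold KK
  simp

lemma abs_KK_le (U : Finset α) (k : ℕ) (S : Finset α) : |KK U k S| ≤ (U.card.choose k : ℤ) := by
  unfold KK
  calc |∑ Z ∈ U.powersetCard k, (-1:ℤ)^((Z ∩ S).card)|
      ≤ ∑ Z ∈ U.powersetCard k, |(-1:ℤ)^((Z ∩ S).card)| := Finset.abs_sum_le_sum_abs _ _
    _ = ∑ Z ∈ U.powersetCard k, 1 := by
        apply Finset.sum_congr rfl; intro Z _; rw [abs_pow, abs_neg, abs_one, one_pow]
    _ = (U.card.choose k : ℤ) := by simp [Finset.card_powersetCard]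

/-- splitting a sum over `k+1`-subsets of `U` by membership of `a ∈ U`. -/
lemma sum_powersetCard_split (U : Finset α) {a : α} (ha : a ∈ U) (k : ℕ) (f : Finset α → ℤ) :
    ∑ Z ∈ U.powersetCard (k+1), f Z =
      (∑ Z ∈ (U.erase a).powersetCard (k+1), f Z) +
      ∑ Z ∈ (U.erase a).powersetCard k, f (insert a Z) := by
  conv_lhs => rw [← Finset.insert_erase ha]
  rw [Finset.powersetCard_succ_insert (Finset.notMem_erase a U)]
  rw [Finset.sum_union]
  · congr 1
    apply Finset.sum_image
    intro Z₁ h₁ Z₂ h₂ hins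
    have n₁ : a ∉ Z₁ := fun h => (Finset.notMem_erase a U)
      ((Finset.mem_powersetCard.1 h₁).1 h)
    have n₂ : a ∉ Z₂ := fun h => (Finset.notMem_erase a U)
      ((Finset.mem_powersetCard.1 h₂).1 h)
    rw [← Finset.erase_insert n₁, ← Finset.erase_insert n₂, hins]
  · rw [Finset.disjoint_right]
    intro Z hZ hZ'
    rcases Finset.mem_image.1 hZ with ⟨W, hW, rfl⟩
    have : a ∈ insert a W := Finset.mem_insert_self a W
    exact (Finset.notMem_erase a U) ((Finset.mem_powersetCard.1 hZ').1 this)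

lemma KK_singleton (U : Finset α) {a : α} (ha : a ∈ U) (k : ℕ) :
    KK U (k+1) {a} = ((U.card - 1).choose (k+1) : ℤ) - ((U.card - 1).choose k : ℤ) := by
  unfold KK
  rw [sum_powersetCard_split U ha k]
  have h1 : ∀ Z ∈ (U.erase a).powersetCard (k+1), (-1:ℤ)^((Z ∩ ({a} : Finset α)).card) = 1 := by
    intro Z hZ
    have : a ∉ Z := fun h => (Finset.notMem_erase a U) ((Finset.mem_powersetCard.1 hZ).1 h)
    have : Z ∩ {a} = ∅ := by
      ext i; simp; rintro hi rfl; exact this hi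
    rw [this]; simp
  have h2 : ∀ Z ∈ (U.erase a).powersetCard k, (-1:ℤ)^(((insert a Z) ∩ ({a} : Finset α)).card) = -1 := by
    intro Z hZ
    have haZ : a ∉ Z := fun h => (Finset.notMem_erase a U) ((Finset.mem_powersetCard.1 hZ).1 h)
    have : (insert a Z) ∩ ({a} : Finset α) = {a} := by
      ext i; simp
    rw [this]; simp
  rw [Finset.sum_congr rfl h1, Finset.sum_congr rfl h2]
  simp [Finset.card_powersetCard, Finset.card_erase_of_mem ha, sub_eq_add_neg]

end KKdef

section KKlemmas
variable {α : Type*} [DecidableEq α]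

lemma negpow_sub {c k : ℕ} (h : c ≤ k) : (-1:ℤ)^(k - c) = (-1:ℤ)^k * (-1:ℤ)^c := by
  rw [← pow_add]; apply negpow_mod; omega

/-- reflection in `S`: complementing `S` inside `U`. -/
lemma KK_compl_S (U : Finset α) (k : ℕ) {S : Finset α} (hS : S ⊆ U) :
    KK U k (U \ S) = (-1:ℤ)^k * KK U k S := by
  unfold KK
  rw [Finset.mul_sum]
  apply Finset.sum_congr rfl
  intro Z hZ
  rcases Finset.mem_powersetCard.1 hZ with ⟨hZU, hZc⟩
  have h1 : Z ∩ (U \ S) = Z \ (Z ∩ S) := by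
    ext i; simp; intro hi; simp [hZU hi]
  have h2 : (Z ∩ (U \ S)).card = k - (Z ∩ S).card := by
    rw [h1, Finset.card_sdiff_of_subset Finset.inter_subset_left, hZc]
  rw [h2, negpow_sub]
  rw [← hZc]
  exact Finset.card_le_card Finset.inter_subset_left

/-- reflection in `Z`: complementing `Z` inside `U`. -/
lemma KK_compl_Z (U : Finset α) {k : ℕ} (hk : k ≤ U.card) {S : Finset α} (hS : S ⊆ U) :
    KK U (U.card - k) S = (-1:ℤ)^(S.card) * KK U k S := by
  unfold KK
  rw [Finset.mul_sum]
  refine Finset.sum_nbij' (fun Z => U \ Z) (fun W => U \ W) ?_ ?_ ?_ ?_ ?_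
  · intro Z hZ
    rcases Finset.mem_powersetCard.1 hZ with ⟨h1, h2⟩
    refine Finset.mem_powersetCard.2 ⟨Finset.sdiff_subset, ?_⟩
    rw [Finset.card_sdiff_of_subset h1, h2]; omega
  · intro W hW
    rcases Finset.mem_powersetCard.1 hW with ⟨h1, h2⟩
    refine Finset.mem_powersetCard.2 ⟨Finset.sdiff_subset, ?_⟩
    rw [Finset.card_sdiff_of_subset h1, h2]
  · exact fun Z hZ => Finset.sdiff_sdiff_eq_self (Finset.mem_powersetCard.1 hZ).1
  · exact fun W hW => Finset.sdiff_sdiff_eq_self (Finset.mem_powersetCard.1 hW).1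
  · intro Z hZ
    have h1 : (U \ Z) ∩ S = S \ (Z ∩ S) := by
      ext i
      simp only [Finset.mem_inter, Finset.mem_sdiff]
      constructor
      · rintro ⟨⟨hiU, hiZ⟩, hiS⟩; exact ⟨hiS, fun h => hiZ h.1⟩
      · rintro ⟨hiS, h⟩; exact ⟨⟨hS hiS, fun hz => h ⟨hz, hiS⟩⟩, hiS⟩
    have hle : (Z ∩ S).card ≤ S.card := Finset.card_le_card Finset.inter_subset_right
    rw [h1, Finset.card_sdiff_of_subset Finset.inter_subset_right, negpow_sub hle, ← mul_assoc, ← pow_add]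
    have h2 : (-1:ℤ)^(S.card + S.card) = 1 := Even.neg_one_pow ⟨S.card, rfl⟩
    rw [h2, one_mul]

/-- splitting off an element not in `S`. -/
lemma KK_split_notS (U : Finset α) {a : α} (ha : a ∈ U) (haS : a ∉ S) (k : ℕ) :
    KK U (k+1) S = KK (U.erase a) (k+1) S + KK (U.erase a) k S := by
  unfold KK
  rw [sum_powersetCard_split U ha k]
  congr 1
  apply Finset.sum_congr rfl
  intro Z hZ
  rw [Finset.insert_inter_of_notMem haS]

/-- splitting off an element of `S`. -/
lemma KK_split_S (U : Finset α) {a : α} (ha : a ∈ U) (haS : a ∈ S) (k : ℕ) :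
    KK U (k+1) S = KK (U.erase a) (k+1) (S.erase a) - KK (U.erase a) k (S.erase a) := by
  unfold KK
  rw [sum_powersetCard_split U ha k, sub_eq_add_neg]
  congr 1
  · apply Finset.sum_congr rfl
    intro Z hZ
    have haZ : a ∉ Z := fun h => (Finset.notMem_erase a U) ((Finset.mem_powersetCard.1 hZ).1 h)
    congr 2
    ext i
    simp only [Finset.mem_inter, Finset.mem_erase]
    constructor
    · rintro ⟨hiZ, hiS⟩; exact ⟨hiZ, fun h => haZ (h ▸ hiZ), hiS⟩
    · rintro ⟨hiZ, _, hiS⟩; exact ⟨hiZ, hiS⟩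
  · rw [← Finset.sum_neg_distrib]
    apply Finset.sum_congr rfl
    intro Z hZ
    have haZ : a ∉ Z := fun h => (Finset.notMem_erase a U) ((Finset.mem_powersetCard.1 hZ).1 h)
    have h1 : (insert a Z) ∩ S = insert a (Z ∩ (S.erase a)) := by
      ext i; simp
      constructor
      · rintro ⟨rfl | hiZ, hiS⟩
        · exact Or.inl rfl
        · by_cases hia : i = a
          · exact Or.inl hia
          · exact Or.inr ⟨hiZ, hia, hiS⟩
      · rintro (rfl | ⟨hiZ, hia, hiS⟩)
        · exact ⟨Or.inl rfl, haS⟩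
        · exact ⟨Or.inr hiZ, hiS⟩
    have h2 : a ∉ Z ∩ (S.erase a) := by simp
    rw [h1, Finset.card_insert_of_notMem h2, pow_succ]
    ring
end KKlemmas

section KKmore
variable {α : Type*} [DecidableEq α]

lemma KK_one (U : Finset α) {S : Finset α} (hS : S ⊆ U) :
    KK U 1 S = (U.card : ℤ) - 2 * S.card := by
  unfold KK
  rw [Finset.powersetCard_one, Finset.sum_map]
  have : ∀ a ∈ U, (-1:ℤ)^((({a} : Finset α) ∩ S).card) = if a ∈ S then -1 else 1 := by
    intro a _
    by_cases h : a ∈ S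
    · have : ({a} : Finset α) ∩ S = {a} := by ext i; simp; rintro rfl; exact h
      simp [this, h]
    · have : ({a} : Finset α) ∩ S = ∅ := by ext i; simp; rintro rfl; exact h
      simp [this, h]
  simp only [Function.Embedding.coeFn_mk]
  rw [Finset.sum_congr rfl this, Finset.sum_ite]
  have h1 : U.filter (· ∈ S) = S := by
    ext i; simp; intro h; exact hS h
  have h2 : (U.filter (· ∉ S)).card = U.card - S.card := by
    rw [Finset.filter_not, Finset.card_sdiff_of_subset]
    · rw [h1]
    · rw [h1]; exact hS
  rw [h1]
  simp only [Finset.sum_const, nsmul_eq_mul, mul_one, mul_neg_one]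
  rw [h2]
  have := Finset.card_le_card hS
  push_cast [this]
  omega

lemma KK_U (U : Finset α) (k : ℕ) : KK U k U = (-1:ℤ)^k * (U.card.choose k : ℤ) := by
  have := KK_compl_S U k (Finset.empty_subset U)
  rw [Finset.sdiff_empty] at this
  rw [this, KK_empty]

lemma KK_selfdual_zero {U : Finset α} {k : ℕ} (hU : U.card = 2*k) {S : Finset α}
    (hS : S ⊆ U) (hodd : Odd S.card) : KK U k S = 0 := by
  have h := KK_compl_Z U (k := k) (by omega) hS
  have h2 : U.card - k = k := by omega
  rw [h2, hodd.neg_one_pow] at h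
  omega

lemma pascalZ (a b : ℕ) (hb : 1 ≤ b) : ((a+1).choose b : ℤ) = a.choose b + a.choose (b-1) := by
  have : b = (b-1)+1 := by omega
  rw [this, Nat.choose_succ_succ' a (b-1)]
  push_cast
  ring

lemma catalanEq {j : ℕ} (hj : 2 ≤ j) :
    ((2*j-1).choose (j-1) : ℤ) - ((2*j-1).choose (j-2) : ℤ)
      = ((2*j).choose j : ℤ) - ((2*j).choose (j-1) : ℤ) := by
  have h1 : (2*j : ℕ) = (2*j-1)+1 := by omega
  have h2 : ((2*j).choose j : ℤ) = (2*j-1).choose j + (2*j-1).choose (j-1) := by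
    conv_lhs => rw [h1]
    rw [pascalZ _ _ (by omega)]
  have h3 : ((2*j).choose (j-1) : ℤ) = (2*j-1).choose (j-1) + (2*j-1).choose (j-2) := by
    conv_lhs => rw [h1]
    rw [pascalZ _ _ (by omega)]
    have : j-1-1 = j-2 := by omega
    rw [this]
  have h4 : (2*j-1).choose j = (2*j-1).choose (j-1) := by
    have : (2*j-1) - j = j-1 := by omega
    rw [← this, Nat.choose_symm (by omega)]
  rw [h2, h3, h4]
  ring

end KKmore

section Gall
variable {α : Type*} [DecidableEq α]

lemma choose_step {m j : ℕ} (hj : 1 ≤ j) (hjm : 2*j < m) :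
    (m-1).choose (j-1) ≤ (m-1).choose j := by
  have h1 : j ≤ (m-1)/2 := (Nat.le_div_iff_mul_le (by norm_num)).2 (by omega)
  have h2 : j - 1 < (m-1)/2 := by omega
  have := Nat.choose_le_succ_of_lt_half_left h2
  have h3 : (j-1)+1 = j := by omega
  rwa [h3] at this

lemma KK_singleton' (U : Finset α) {a : α} (ha : a ∈ U) {j : ℕ} (hj : 1 ≤ j) :
    KK U j {a} = ((U.card - 1).choose j : ℤ) - ((U.card - 1).choose (j-1) : ℤ) := by
  have h : j = (j-1)+1 := by omega
  rw [h, KK_singleton U ha (j-1)]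
  congr 3 <;> omega

lemma Gall : ∀ (m : ℕ), ∀ (U : Finset α) (j : ℕ) (S : Finset α), U.card = m →
    1 ≤ j → 2*j < m → S ⊆ U → S.Nonempty → S ≠ U →
    |KK U j S| ≤ ((m-1).choose j : ℤ) - ((m-1).choose (j-1) : ℤ) := by
  intro m
  induction m using Nat.strong_induction_on with
  | _ m ih =>
  intro U j S hU hj hjm hSU hSne hSneq
  have hx1 : 1 ≤ S.card := Finset.card_pos.2 hSne
  have hxm : S.card < m := by
    rw [← hU]
    exact Finset.card_lt_card (Finset.ssubset_iff_subset_ne.2 ⟨hSU, hSneq⟩)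
  rcases eq_or_lt_of_le hj with hj1 | hj2
  -- case j = 1
  · rw [← hj1]
    rw [KK_one U hSU, hU]
    have e0 : (m-1).choose 1 = m-1 := Nat.choose_one_right _
    have e1 : (m-1).choose (1-1) = 1 := Nat.choose_zero_right _
    rw [e0, e1]
    have hm : 3 ≤ m := by omega
    rw [abs_le]
    constructor <;> [skip; skip] <;>
    · push_cast [show (1:ℕ) ≤ m - 1 by omega, show (1:ℕ) ≤ m by omega]
      omega
  -- case 2 ≤ j
  · by_cases hxe1 : S.card = 1
    · -- S a singleton
      obtain ⟨a, rfl⟩ := Finset.card_eq_one.1 hxe1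
      have ha : a ∈ U := hSU (Finset.mem_singleton_self a)
      rw [KK_singleton' U ha (by omega), hU]
      have hnn : (0:ℤ) ≤ ((m-1).choose j : ℤ) - ((m-1).choose (j-1) : ℤ) := by
        have := choose_step (le_of_lt hj2) hjm
        omega
      rw [abs_of_nonneg hnn]
    · by_cases hxem1 : S.card = m - 1
      · -- complement of a singleton
        have hT : (U \ S).card = 1 := by
          rw [Finset.card_sdiff_of_subset hSU, hU, hxem1]; omega
        have hSS : S = U \ (U \ S) := (Finset.sdiff_sdiff_eq_self hSU).symm
        have h2 := KK_compl_S U j (Finset.sdiff_subset (s := U) (t := S))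
        rw [← hSS] at h2
        obtain ⟨a, haT⟩ := Finset.card_eq_one.1 hT
        have ha : a ∈ U := by
          have : a ∈ U \ S := haT ▸ Finset.mem_singleton_self a
          exact (Finset.mem_sdiff.1 this).1
        rw [h2, haT, KK_singleton' U ha (by omega), hU]
        rw [abs_mul, abs_pow, abs_neg, abs_one, one_pow, one_mul, abs_of_nonneg]
        have := choose_step (le_of_lt hj2) hjm
        omega
      · -- now 2 ≤ S.card ≤ m-2
        have hx2 : 2 ≤ S.card := by omega
        have hxm2 : S.card ≤ m - 2 := by omega
        by_cases hedge : 2*j+1 = m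
        · -- edge case m = 2j+1
          have hm : m = 2*j+1 := hedge.symm
          have hj2' : 2 ≤ j := hj2
          rcases Nat.even_or_odd S.card with hxev | hxodd
          · -- S.card even : split off an element of S
            obtain ⟨u, hu⟩ := hSne
            have huU : u ∈ U := hSU hu
            have hU' : (U.erase u).card = 2*j := by
              rw [Finset.card_erase_of_mem huU, hU]; omega
            have hU'm : (U.erase u).card = m - 1 := by omega
            have hS'U' : S.erase u ⊆ U.erase u := Finset.erase_subset_erase u hSU
            have hS'card : (S.erase u).card = S.card - 1 := Finset.card_erase_of_mem hu
            have hodd : Odd (S.erase u).card := by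
              rw [hS'card, Nat.odd_iff]; rw [Nat.even_iff] at hxev; omega
            have e1 := KK_compl_Z U (k := j+1) (by rw [hU]; omega) hSU
            have hUc : U.card - (j+1) = j := by rw [hU]; omega
            rw [hUc, hxev.neg_one_pow, one_mul] at e1
            have e2 : KK U (j+1) S = KK (U.erase u) (j+1) (S.erase u)
                - KK (U.erase u) j (S.erase u) := KK_split_S U huU hu j
            have e3 : KK (U.erase u) j (S.erase u) = 0 :=
              KK_selfdual_zero hU' hS'U' hodd
            have e4 := KK_compl_Z (U.erase u) (k := j+1) (by rw [hU']; omega) hS'U'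
            have hU'c : (U.erase u).card - (j+1) = j - 1 := by rw [hU']; omega
            rw [hU'c, hodd.neg_one_pow] at e4
            have key : KK U j S = - KK (U.erase u) (j-1) (S.erase u) := by
              rw [e1, e2, e3, sub_zero]; linarith [e4]
            have hb := ih (m-1) (by omega) (U.erase u) (j-1) (S.erase u) hU'm
              (by omega) (by omega) hS'U'
              (Finset.card_pos.1 (by omega))
              (by intro h; have := congrArg Finset.card h; rw [hU'm, hS'card] at this; omega)
            rw [key, abs_neg]
            refine le_trans hb (le_of_eq ?_)
            rw [show m-1-1 = 2*j-1 from by omega, show j-1-1 = j-2 from by omega,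
              show m-1 = 2*j from by omega]
            exact catalanEq hj2'
          · -- S.card odd : split off an element outside S
            obtain ⟨u, hu⟩ : (U \ S).Nonempty := by
              rw [← Finset.card_pos, Finset.card_sdiff_of_subset hSU, hU]; omega
            have huU : u ∈ U := (Finset.mem_sdiff.1 hu).1
            have huS : u ∉ S := (Finset.mem_sdiff.1 hu).2
            have hU' : (U.erase u).card = 2*j := by
              rw [Finset.card_erase_of_mem huU, hU]; omega
            have hU'm : (U.erase u).card = m - 1 := by omega
            have hSU' : S ⊆ U.erase u := fun i hi =>
              Finset.mem_erase.2 ⟨fun h => huS (h ▸ hi), hSU hi⟩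
            have e1 := KK_compl_Z U (k := j+1) (by rw [hU]; omega) hSU
            have hUc : U.card - (j+1) = j := by rw [hU]; omega
            rw [hUc, hxodd.neg_one_pow] at e1
            have e2 : KK U (j+1) S = KK (U.erase u) (j+1) S
                + KK (U.erase u) j S := KK_split_notS U huU huS j
            have e3 : KK (U.erase u) j S = 0 := KK_selfdual_zero hU' hSU' hxodd
            have e4 := KK_compl_Z (U.erase u) (k := j+1) (by rw [hU']; omega) hSU'
            have hU'c : (U.erase u).card - (j+1) = j - 1 := by rw [hU']; omega
            rw [hU'c, hxodd.neg_one_pow] at e4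
            have key : KK U j S = KK (U.erase u) (j-1) S := by
              rw [e1, e2, e3, add_zero] at *; linarith [e4]
            have hb := ih (m-1) (by omega) (U.erase u) (j-1) S hU'm
              (by omega) (by omega) hSU' hSne
              (by intro h; have := congrArg Finset.card h; rw [hU'm] at this; omega)
            rw [key]
            refine le_trans hb (le_of_eq ?_)
            rw [show m-1-1 = 2*j-1 from by omega, show j-1-1 = j-2 from by omega,
              show m-1 = 2*j from by omega]
            exact catalanEq hj2'
        · -- interior case 2j < m-1
          have hjm' : 2*j < m - 1 := by omega
          obtain ⟨u, hu⟩ : (U \ S).Nonempty := by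
            rw [← Finset.card_pos, Finset.card_sdiff_of_subset hSU, hU]; omega
          have huU : u ∈ U := (Finset.mem_sdiff.1 hu).1
          have huS : u ∉ S := (Finset.mem_sdiff.1 hu).2
          have hjsplit : j = (j-1)+1 := by omega
          have hsplit : KK U j S = KK (U.erase u) j S + KK (U.erase u) (j-1) S := by
            rw [hjsplit]
            exact KK_split_notS U huU huS (j-1)
          have hU' : (U.erase u).card = m - 1 := by
            rw [Finset.card_erase_of_mem huU, hU]
          have hSU' : S ⊆ U.erase u := fun i hi =>
            Finset.mem_erase.2 ⟨fun h => huS (h ▸ hi), hSU hi⟩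
          have hSneq' : S ≠ U.erase u := by
            intro h
            have := congrArg Finset.card h
            rw [hU'] at this; omega
          have b1 := ih (m-1) (by omega) (U.erase u) j S hU' hj (by omega) hSU' hSne hSneq'
          have b2 := ih (m-1) (by omega) (U.erase u) (j-1) S hU' (by omega) (by omega) hSU' hSne hSneq'
          have hm2 : m - 1 - 1 = m - 2 := by omega
          rw [hm2] at b1 b2
          have htot : ((m-1).choose j : ℤ) - ((m-1).choose (j-1) : ℤ)
              = (((m-2).choose j : ℤ) - ((m-2).choose (j-1) : ℤ))
                + (((m-2).choose (j-1) : ℤ) - ((m-2).choose (j-1-1) : ℤ)) := by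
            have hma : m - 1 = (m-2)+1 := by omega
            rw [hma, pascalZ _ _ (by omega), pascalZ _ _ (by omega)]
            ring
          calc |KK U j S| ≤ |KK (U.erase u) j S| + |KK (U.erase u) (j-1) S| := by
                rw [hsplit]; exact abs_add_le _ _
            _ ≤ _ := by rw [htot]; exact add_le_add b1 b2

lemma rhs_nonpos {n k : ℕ} (hkn : k ≤ n) (hn : n < 2*k) (hk1 : 1 ≤ k) :
    (n-1).choose k ≤ (n-1).choose (k-1) := by
  rcases eq_or_lt_of_le hkn with rfl | hlt
  · have h1 : (k-1).choose k = 0 := Nat.choose_eq_zero_of_lt (by omega)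
    rw [h1]; omega
  · -- k ≤ n-1
    have hk : k ≤ n-1 := by omega
    have s1 : (n-1).choose k = (n-1).choose (n-1-k) := (Nat.choose_symm hk).symm
    have step : (n-1).choose (n-1-k) ≤ (n-1).choose (n-1-k+1) := by
      apply Nat.choose_le_succ_of_lt_half_left
      have : n-1-k+1 ≤ (n-1)/2 := (Nat.le_div_iff_mul_le (by norm_num)).2 (by omega)
      omega
    have e1 : n-1-k+1 = n-k := by omega
    have s2 : (n-1).choose (n-k) = (n-1).choose (k-1) := by
      have : (n-1) - (n-k) = k-1 := by omega
      rw [← this, Nat.choose_symm (by omega)]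
    rw [s1]
    rw [e1] at step
    rw [s2] at step
    exact step

/-- Main inequality: the Krawtchouk value at any `S` is at least the value at a singleton. -/
lemma Kmin {n k : ℕ} (hk : Even k) (hkn : k ≤ n) (hn : n < 2*k)
    (U : Finset α) (hU : U.card = n) (S : Finset α) (hS : S ⊆ U) :
    ((n-1).choose k : ℤ) - ((n-1).choose (k-1) : ℤ) ≤ KK U k S := by
  have hk1 : 1 ≤ k := by omega
  have hk2 : 2 ≤ k := by
    rcases hk with ⟨c, hc⟩; omega
  have hrhs : ((n-1).choose k : ℤ) - ((n-1).choose (k-1) : ℤ) ≤ 0 := by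
    have := rhs_nonpos hkn hn hk1; omega
  rcases Finset.eq_empty_or_nonempty S with rfl | hSne
  · rw [KK_empty, hU]
    have : (0:ℤ) ≤ (n.choose k : ℤ) := by positivity
    omega
  · by_cases hSU : S = U
    · subst hSU
      rw [KK_U, hU, hk.neg_one_pow, one_mul]
      have : (0:ℤ) ≤ (n.choose k : ℤ) := by positivity
      omega
    · -- 1 ≤ |S| ≤ n-1
      have hx1 : 1 ≤ S.card := Finset.card_pos.2 hSne
      have hxm : S.card < n := by
        rw [← hU]
        exact Finset.card_lt_card (Finset.ssubset_iff_subset_ne.2 ⟨hS, hSU⟩)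
      have hcz := KK_compl_Z U (k := k) (by omega) hS
      -- hcz : KK U (n - k) S = (-1)^|S| * KK U k S
      rw [hU] at hcz
      by_cases hj0 : n = k
      · -- here n - k = 0
        have h0 : n - k = 0 := by omega
        rw [h0, KK_zero] at hcz
        -- 1 = (-1)^|S| * KK U k S hence KK U k S = ±1
        have habs : |KK U k S| = 1 := by
          rcases Nat.even_or_odd S.card with he | ho
          · rw [he.neg_one_pow, one_mul] at hcz; rw [← hcz]; norm_num
          · rw [ho.neg_one_pow] at hcz
            have : KK U k S = -1 := by linarith
            rw [this]; norm_num
        have h1 : (n-1).choose k = 0 := Nat.choose_eq_zero_of_lt (by omega)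
        have h2 : (n-1).choose (k-1) = 1 := by
          rw [show k-1 = n-1 from by omega, Nat.choose_self]
        rw [h1, h2]
        have := abs_le.1 (le_of_eq habs)
        omega
      · -- j = n - k ≥ 1
        set j := n - k with hjdef
        have hj1 : 1 ≤ j := by omega
        have h2j : 2*j < n := by omega
        have hb := Gall n U j S hU hj1 h2j hS hSne hSU
        -- |KK U j S| ≤ C(n-1,j) - C(n-1,j-1)
        have s1 : (n-1).choose j = (n-1).choose (k-1) := by
          rw [show j = (n-1)-(k-1) from by omega, Nat.choose_symm (by omega)]
        have s2 : (n-1).choose (j-1) = (n-1).choose k := by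
          rw [show j-1 = (n-1)-k from by omega, Nat.choose_symm (by omega)]
        rw [s1, s2] at hb
        -- KK U k S = (-1)^|S| * KK U j S  (from hcz, multiplying both sides)
        have hks : KK U k S = (-1:ℤ)^(S.card) * KK U j S := by
          have hsq : (-1:ℤ)^(S.card) * (-1:ℤ)^(S.card) = 1 := by
            rw [← pow_add]; exact Even.neg_one_pow ⟨S.card, rfl⟩
          calc KK U k S = ((-1:ℤ)^(S.card) * (-1:ℤ)^(S.card)) * KK U k S := by
                rw [hsq, one_mul]
            _ = (-1:ℤ)^(S.card) * KK U j S := by rw [mul_assoc, ← hcz]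
        have : -(|KK U j S|) ≤ KK U k S := by
          rw [hks]
          rcases Nat.even_or_odd S.card with he | ho
          · rw [he.neg_one_pow, one_mul]; exact neg_abs_le _
          · rw [ho.neg_one_pow, neg_one_mul]; simp [abs_le]
            exact le_abs_self _
        omega

end Gall

section Cube
attribute [local instance] Classical.propDecidable

variable {n : ℕ}

/-- the support of a boolean vector. -/
def yset (y : Fin n → Bool) : Finset (Fin n) := Finset.univ.filter (fun i => y i = true)

lemma mem_yset {y : Fin n → Bool} {i : Fin n} : i ∈ yset y ↔ y i = true := by
  simp [yset]

lemma yset_decide (Z : Finset (Fin n)) : yset (fun i => decide (i ∈ Z)) = Z := by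
  ext i; simp [mem_yset]

lemma yset_inj {s t : Fin n → Bool} (h : yset s = yset t) : s = t := by
  funext i
  have := congrArg (i ∈ ·) h
  simp only [mem_yset] at this
  cases hs : s i <;> cases ht : t i <;> simp_all

lemma yset_xor (x z : Fin n → Bool) :
    yset (fun i => xor (x i) (z i)) = symmDiff (yset x) (yset z) := by
  ext i
  simp only [mem_yset, Finset.mem_symmDiff]
  cases hx : x i <;> cases hz : z i <;> simp [hx, hz]

/-- the character function. -/
noncomputable def chi (S : Finset (Fin n)) (y : Fin n → Bool) : ℝ :=
  (-1)^((S ∩ yset y).card)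

lemma chi_mul (S T : Finset (Fin n)) (y : Fin n → Bool) :
    chi S y * chi T y = chi (symmDiff S T) y := by
  unfold chi
  rw [show symmDiff S T ∩ yset y = yset y ∩ symmDiff S T from Finset.inter_comm _ _,
    negpow_inter_symmDiff, Finset.inter_comm (yset y) S, Finset.inter_comm (yset y) T]

lemma sum_chi_empty : ∑ y : Fin n → Bool, chi ∅ y = 2^n := by
  have : ∀ y : Fin n → Bool, chi ∅ y = 1 := by
    intro y; unfold chi; simp
  rw [Finset.sum_congr rfl (fun y _ => this y)]
  simp [Fintype.card_fun]

lemma sum_chi_ne (D : Finset (Fin n)) (hD : D.Nonempty) :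
    ∑ y : Fin n → Bool, chi D y = 0 := by
  obtain ⟨d, hd⟩ := hD
  have hinv : Function.Involutive (fun (y : Fin n → Bool) => Function.update y d (!(y d))) := by
    intro y
    funext i
    by_cases h : i = d <;> simp [Function.update, h]
  have hflip : ∀ y : Fin n → Bool, chi D (Function.update y d (!(y d))) = - chi D y := by
    intro y
    have hy : yset (Function.update y d (!(y d))) = symmDiff (yset y) {d} := by
      ext i
      simp only [mem_yset, Finset.mem_symmDiff, Finset.mem_singleton]
      by_cases h : i = d
      · subst h; simp only [Function.update_self]; cases hyd : y i <;> simp [hyd]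
      · simp [Function.update, h]
    unfold chi
    rw [hy]
    have h1 : D ∩ symmDiff (yset y) {d} = symmDiff (D ∩ yset y) (D ∩ {d}) := by
      rw [← inter_symmDiff']
    have h2 : D ∩ ({d} : Finset (Fin n)) = {d} := by
      ext i; simp; rintro rfl; exact hd
    rw [h1, h2]
    have h3 := card_symmDiff' (D ∩ yset y) ({d} : Finset (Fin n))
    rw [Finset.card_singleton] at h3
    rw [show ((symmDiff (D ∩ yset y) {d}).card) = (symmDiff (D ∩ yset y) {d}).card from rfl]
    calc (-1:ℝ)^((symmDiff (D ∩ yset y) {d}).card)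
        = (-1:ℝ)^((D ∩ yset y).card + 1) := by
          apply negpow_mod; omega
      _ = - (-1:ℝ)^((D ∩ yset y).card) := by rw [pow_succ]; ring
  have := Equiv.sum_comp (hinv.toPerm _) (chi D)
  rw [Finset.sum_congr rfl (fun y _ => by
      show chi D (Function.update y d (!(y d))) = - chi D y
      exact hflip y)] at this
  rw [Finset.sum_neg_distrib] at this
  linarith

/-- the Hadamard-type matrix of characters. -/
noncomputable def Hm (n : ℕ) : Matrix (Fin n → Bool) (Fin n → Bool) ℝ :=
  fun s y => chi (yset s) y

lemma Hm_mul_Hm : Hm n * Hm n = (2^n : ℝ) • 1 := by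
  ext s t
  rw [Matrix.mul_apply]
  have h1 : ∀ y, Hm n s y * Hm n y t = chi (symmDiff (yset s) (yset t)) y := by
    intro y
    have : Hm n y t = chi (yset t) y := by
      unfold Hm chi
      apply negpow_mod
      rw [Finset.inter_comm]
    rw [this]
    exact chi_mul _ _ y
  rw [Finset.sum_congr rfl (fun y _ => h1 y)]
  by_cases hst : s = t
  · subst hst
    have : symmDiff (yset s) (yset s) = ∅ := by
      rw [symmDiff_self, Finset.bot_eq_empty]
    rw [this, sum_chi_empty]
    simp [Matrix.one_apply]
  · have hne : symmDiff (yset s) (yset t) ≠ ∅ := by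
      intro h
      exact hst (yset_inj (symmDiff_eq_bot.1 (by rw [Finset.bot_eq_empty]; exact h)))
    rw [sum_chi_ne _ (Finset.nonempty_iff_ne_empty.2 hne)]
    simp [Matrix.one_apply, hst]

end Cube

section Cube2
attribute [local instance] Classical.propDecidable

variable {n k : ℕ}

lemma neighbor_filter (hk1 : 1 ≤ k) (x : Fin n → Bool) :
    (cubeEqGraph n k).neighborFinset x
      = Finset.univ.filter (fun y => hammingDist x y = k) := by
  rw [SimpleGraph.neighborFinset_eq_filter]
  apply Finset.filter_congr
  intro y _
  show (cubeEqGraph n k).Adj x y ↔ _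
  rw [cubeEqGraph, SimpleGraph.fromRel_adj]
  constructor
  · rintro ⟨hne, h | h⟩
    · exact h
    · rwa [hammingDist_comm]
  · intro h
    refine ⟨?_, Or.inl h⟩
    rintro rfl
    rw [hammingDist_self] at h
    omega

lemma hamming_yset (x y : Fin n → Bool) :
    hammingDist x y = (yset (fun i => xor (x i) (y i))).card := by
  show (Finset.univ.filter fun i => x i ≠ y i).card = _
  unfold yset
  congr 1
  apply Finset.filter_congr
  intro i _
  cases hx : x i <;> cases hy : y i <;> simp [hx, hy]

lemma xor_xor (x z : Fin n → Bool) : (fun i => xor (x i) (xor (x i) (z i))) = z := by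
  funext i
  cases hx : x i <;> cases hz : z i <;> simp [hx, hz]

lemma xor_invol (x : Fin n → Bool) :
    Function.Involutive (fun (y : Fin n → Bool) => fun i => xor (x i) (y i)) := by
  intro y
  funext i
  cases hx : x i <;> cases hy : y i <;> simp [hx, hy]

lemma KK_real (S : Finset (Fin n)) (k : ℕ) :
    ((KK (Finset.univ : Finset (Fin n)) k S : ℤ) : ℝ)
      = ∑ Z ∈ (Finset.univ : Finset (Fin n)).powersetCard k, (-1:ℝ)^((Z ∩ S).card) := by
  unfold KK
  push_cast
  rfl

lemma sum_weight (S : Finset (Fin n)) (k : ℕ) :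
    ∑ z ∈ Finset.univ.filter (fun z : Fin n → Bool => (yset z).card = k),
        (-1:ℝ)^((S ∩ yset z).card)
      = ((KK (Finset.univ : Finset (Fin n)) k S : ℤ) : ℝ) := by
  rw [KK_real]
  refine Finset.sum_nbij' (fun z => yset z) (fun Z => fun i => decide (i ∈ Z)) ?_ ?_ ?_ ?_ ?_
  · intro z hz
    rw [Finset.mem_powersetCard_univ]
    exact (Finset.mem_filter.1 hz).2
  · intro Z hZ
    simp only [Finset.mem_filter, Finset.mem_univ, true_and, yset_decide]
    exact Finset.mem_powersetCard_univ.1 hZ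
  · intro z _
    funext i
    simp [mem_yset]
  · intro Z _
    exact yset_decide Z
  · intro z _
    rw [Finset.inter_comm]

lemma AH_eq_HD (hk1 : 1 ≤ k) :
    (cubeEqGraph n k).adjMatrix ℝ * Hm n
      = Hm n * Matrix.diagonal (fun s => ((KK (Finset.univ : Finset (Fin n)) k (yset s) : ℤ) : ℝ)) := by
  ext x s
  rw [SimpleGraph.adjMatrix_mul_apply, Matrix.mul_diagonal, neighbor_filter hk1]
  have step1 : ∑ y ∈ Finset.univ.filter (fun y => hammingDist x y = k), Hm n y s
      = ∑ z ∈ Finset.univ.filter (fun z : Fin n → Bool => (yset z).card = k),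
          Hm n (fun i => xor (x i) (z i)) s := by
    refine Finset.sum_nbij' (fun y => fun i => xor (x i) (y i))
      (fun z => fun i => xor (x i) (z i)) ?_ ?_ ?_ ?_ ?_
    · intro y hy
      simp only [Finset.mem_filter, Finset.mem_univ, true_and] at *
      rw [← hamming_yset]; exact hy
    · intro z hz
      simp only [Finset.mem_filter, Finset.mem_univ, true_and] at *
      rw [hamming_yset, xor_xor]; exact hz
    · intro y _; exact xor_invol x y
    · intro z _; exact xor_invol x z
    · intro y _
      exact congrArg (fun w => Hm n w s) (xor_xor x y).symm
  rw [step1]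
  have step2 : ∀ z : Fin n → Bool,
      Hm n (fun i => xor (x i) (z i)) s
        = (-1:ℝ)^((yset s ∩ yset x).card) * (-1:ℝ)^((yset s ∩ yset z).card) := by
    intro z
    show chi (yset (fun i => xor (x i) (z i))) s = _
    unfold chi
    rw [← negpow_inter_symmDiff, ← yset_xor]
    apply negpow_mod
    rw [Finset.inter_comm]
  rw [Finset.sum_congr rfl (fun z _ => step2 z), ← Finset.mul_sum, sum_weight]
  congr 1
  have : Hm n x s = (-1:ℝ)^((yset s ∩ yset x).card) := by
    unfold Hm chi
    apply negpow_mod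
    rw [Finset.inter_comm]
  rw [this]

end Cube2

section Cube3
attribute [local instance] Classical.propDecidable

variable {n k : ℕ}

lemma Hm_isUnit : IsUnit (Hm n) := by
  rw [Matrix.isUnit_iff_isUnit_det, isUnit_iff_ne_zero]
  intro h0
  have hdet := congrArg Matrix.det (Hm_mul_Hm (n := n))
  rw [Matrix.det_mul, h0, mul_zero, Matrix.det_smul, Matrix.det_one, mul_one] at hdet
  have hpos : ((2:ℝ)^n) ^ Fintype.card (Fin n → Bool) ≠ 0 := by positivity
  exact hpos hdet.symm

lemma spec_char (hk1 : 1 ≤ k) (μ : ℝ) :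
    μ ∈ spectrum ℝ ((cubeEqGraph n k).adjMatrix ℝ)
      ↔ ∃ s : Fin n → Bool,
          μ = ((KK (Finset.univ : Finset (Fin n)) k (yset s) : ℤ) : ℝ) := by
  have hH := Hm_isUnit (n := n)
  have hdet : IsUnit (Hm n).det := (Matrix.isUnit_iff_isUnit_det _).1 hH
  set A := (cubeEqGraph n k).adjMatrix ℝ with hAdef
  set D := Matrix.diagonal
      (fun s : Fin n → Bool => ((KK (Finset.univ : Finset (Fin n)) k (yset s) : ℤ) : ℝ)) with hDdef
  have hA : A = Hm n * D * (Hm n)⁻¹ := by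
    calc A = A * ((Hm n) * (Hm n)⁻¹) := by rw [Matrix.mul_nonsing_inv _ hdet, Matrix.mul_one]
      _ = (A * Hm n) * (Hm n)⁻¹ := by rw [Matrix.mul_assoc]
      _ = Hm n * D * (Hm n)⁻¹ := by rw [hAdef, AH_eq_HD hk1]
  have hconj : μ • (1 : Matrix (Fin n → Bool) (Fin n → Bool) ℝ) - A
      = Hm n * (μ • 1 - D) * (Hm n)⁻¹ := by
    rw [hA, Matrix.mul_sub, Matrix.sub_mul]
    congr 1
    rw [Matrix.mul_smul, Matrix.mul_one, Matrix.smul_mul, Matrix.mul_nonsing_inv _ hdet]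
  rw [spectrum.mem_iff, Algebra.algebraMap_eq_smul_one, hconj,
    Matrix.isUnit_iff_isUnit_det, Matrix.det_conj hH,
    Matrix.smul_one_eq_diagonal, hDdef, Matrix.diagonal_sub, Matrix.det_diagonal,
    isUnit_iff_ne_zero, not_not, Finset.prod_eq_zero_iff]
  constructor
  · rintro ⟨s, _, hs⟩
    exact ⟨s, by linarith⟩
  · rintro ⟨s, rfl⟩
    exact ⟨s, Finset.mem_univ s, by ring⟩

end Cube3

/-- For `k` even, `k ≤ n < 2k`, the smallest adjacency eigenvalue of `Q_n^{=k}` is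
`C(n,k)(1 − 2k/n)`, attained by the Krawtchouk value at a weight-1 vector. -/
theorem cubeEq_smallest_eigenvalue (n k : ℕ) (hk : Even k) (hkn : k ≤ n) (hn : n < 2 * k) :
    ((n.choose k : ℝ) * (1 - 2 * k / n) ∈
        spectrum ℝ ((cubeEqGraph n k).adjMatrix ℝ)) ∧
    (∀ μ ∈ spectrum ℝ ((cubeEqGraph n k).adjMatrix ℝ),
        (n.choose k : ℝ) * (1 - 2 * k / n) ≤ μ) ∧
    (n.choose k : ℝ) * (1 - 2 * k / n) =
      ∑ t ∈ Finset.range (k + 1),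
        (-1 : ℝ) ^ t * (Nat.choose 1 t) * (Nat.choose (n - 1) (k - t)) := by
  have hk1 : 1 ≤ k := by omega
  have hk2 : 2 ≤ k := by rcases hk with ⟨c, hc⟩; omega
  have hn0 : 0 < n := by omega
  have cardUniv : (Finset.univ : Finset (Fin n)).card = n := by simp
  -- the two binomial identities
  have i1 : (n : ℕ) * (n-1).choose (k-1) = n.choose k * k := by
    have h := Nat.add_one_mul_choose_eq (n-1) (k-1)
    have e1 : n-1+1 = n := by omega
    have e2 : k-1+1 = k := by omega
    rw [e1, e2] at h
    exact h
  have i2 : n.choose k = (n-1).choose (k-1) + (n-1).choose k := by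
    have h := Nat.choose_succ_succ (n-1) (k-1)
    have e1 : (n-1).succ = n := by omega
    have e2 : (k-1).succ = k := by omega
    rw [e1, e2] at h
    exact h
  have i1' : (n : ℝ) * (n-1).choose (k-1) = n.choose k * k := by exact_mod_cast i1
  have i2' : (n.choose k : ℝ) = (n-1).choose (k-1) + (n-1).choose k := by exact_mod_cast i2
  have hnne : (n : ℝ) ≠ 0 := by positivity
  have key : (n.choose k : ℝ) * (1 - 2 * k / n)
      = ((n-1).choose k : ℝ) - ((n-1).choose (k-1) : ℝ) := by
    field_simp
    nlinarith [i1', i2']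
  refine ⟨?_, ?_, ?_⟩
  · -- membership
    rw [key, spec_char hk1]
    set i0 : Fin n := ⟨0, hn0⟩
    refine ⟨fun i => decide (i = i0), ?_⟩
    have hy : yset (fun i => decide (i = i0)) = {i0} := by
      ext i; simp [mem_yset]
    rw [hy, KK_singleton' Finset.univ (Finset.mem_univ i0) hk1, cardUniv]
    push_cast
    ring
  · -- minimality
    intro μ hμ
    rw [spec_char hk1] at hμ
    obtain ⟨s, rfl⟩ := hμ
    rw [key]
    have hmin := Kmin hk hkn hn Finset.univ cardUniv (yset s) (Finset.subset_univ _)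
    have hreal : ((((n-1).choose k : ℤ) - ((n-1).choose (k-1) : ℤ) : ℤ) : ℝ)
        ≤ ((KK (Finset.univ : Finset (Fin n)) k (yset s) : ℤ) : ℝ) := Int.cast_le.mpr hmin
    push_cast at hreal
    exact hreal
  · -- the Krawtchouk formula at x = 1
    rw [key]
    obtain ⟨k2, rfl⟩ : ∃ k2, k = k2 + 2 := ⟨k - 2, by omega⟩
    rw [Finset.sum_range_succ' _ (k2 + 2), Finset.sum_range_succ' _ (k2 + 1)]
    have hz : ∀ i ∈ Finset.range (k2+1),
        (-1 : ℝ) ^ (i+1+1) * (Nat.choose 1 (i+1+1)) * (Nat.choose (n - 1) (k2+2 - (i+1+1))) = 0 := by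
      intro i _
      have : Nat.choose 1 (i+1+1) = 0 := Nat.choose_eq_zero_of_lt (by omega)
      rw [this]
      push_cast
      ring
    rw [Finset.sum_eq_zero hz]
    norm_num
    ring
end
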